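/- arXiv:math/0008174 — 6 statements merged into one kernel-verified Lean document; each statement's English description precedes it below -/
import Mathlib

section
/- Let g ∈ L²(ℝ), a > 0, b > 0, and let f ∈ L²(ℝ) be bounded and compactly supported. Then Σ_{k∈ℤ} ∫_ℝ | conj(f(t)) f(t−k/b) Σ_{n∈ℤ} g(t−na) conj(g(t−na−k/b)) | dt ≤ ∫_ℝ |f(t)|² Σ_{k∈ℤ} |G_k(t)| dt, where G_k(t) = Σ_{n∈ℤ} g(t−na) conj(g(t−na−k/b)). -/
open MeasureTheory Set
open scoped ENNReal NNReal

noncomputable section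

/-- The Gabor atom `E_{mb} T_{na} g`. -/
def gabor (g : ℝ → ℂ) (a b : ℝ) (m n : ℤ) : ℝ → ℂ :=
  fun t => Complex.exp (2 * (Real.pi : ℂ) * Complex.I * ((m : ℂ) * (b : ℂ)) * (t : ℂ)) *
    g (t - (n : ℝ) * a)

/-- Frame coefficient `⟨f, E_{mb} T_{na} g⟩` in `L²(ℝ)`. -/
def whCoef (g : ℝ → ℂ) (a b : ℝ) (f : ℝ → ℂ) (p : ℤ × ℤ) : ℂ :=
  ∫ t : ℝ, f t * (starRingEnd ℂ) (gabor g a b p.1 p.2 t)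

/-- `(g,a,b)` is a Weyl–Heisenberg frame for `L²(ℝ)` with frame bounds `A, B`. -/
def IsWHFrameWith (g : ℝ → ℂ) (a b A B : ℝ) : Prop :=
  MemLp g 2 volume ∧ 0 < A ∧ 0 < B ∧
  ∀ f : ℝ → ℂ, MemLp f 2 volume →
    Summable (fun p : ℤ × ℤ => ‖whCoef g a b f p‖ ^ 2) ∧
    A * ∫ t : ℝ, ‖f t‖ ^ 2 ≤ (∑' p : ℤ × ℤ, ‖whCoef g a b f p‖ ^ 2) ∧
    (∑' p : ℤ × ℤ, ‖whCoef g a b f p‖ ^ 2) ≤ B * ∫ t : ℝ, ‖f t‖ ^ 2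

/-- `(g,a,b)` is a Weyl–Heisenberg frame for `L²(ℝ)`. -/
def IsWHFrame (g : ℝ → ℂ) (a b : ℝ) : Prop :=
  ∃ A B : ℝ, IsWHFrameWith g a b A B

/-- The Wiener amalgam norm `‖g‖_{W,a}`, valued in `ℝ≥0∞`. -/
def wienerNorm (g : ℝ → ℂ) (a : ℝ) : ℝ≥0∞ :=
  ∑' n : ℤ, eLpNorm (fun t => g (t - (n : ℝ) * a)) ⊤ (volume.restrict (Set.Ico 0 a))

/-- The correlation function `G_k(t) = ∑_n g(t-na) conj(g(t-na-k/b))`. -/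
def Gcorr (g : ℝ → ℂ) (a b : ℝ) (k : ℤ) (t : ℝ) : ℂ :=
  ∑' n : ℤ, g (t - (n : ℝ) * a) * (starRingEnd ℂ) (g (t - (n : ℝ) * a - (k : ℝ) / b))

lemma measurable_tsum_int' {α : Type*} [MeasurableSpace α] {h : ℤ → α → ℂ}
    (hm : ∀ i, Measurable (h i)) : Measurable (fun t => ∑' i : ℤ, h i t) := by
  classical
  let e : ℕ ≃ ℤ := (Denumerable.eqv ℤ).symm
  set S : Set α := {t | Summable fun i : ℤ => h i t} with hSdef
  have hSm : MeasurableSet S := by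
    have heq : S = ((fun t => ∑' i : ℤ, (‖h i t‖₊ : ℝ≥0∞)) ⁻¹' {∞})ᶜ := by
      ext t
      simp only [hSdef, Set.mem_setOf_eq, Set.mem_compl_iff, Set.mem_preimage,
        Set.mem_singleton_iff, ← ne_eq, ENNReal.tsum_coe_ne_top_iff_summable]
      rw [← NNReal.summable_coe]
      simp only [coe_nnnorm]
      exact (summable_norm_iff).symm
    rw [heq]
    exact ((Measurable.ennreal_tsum fun i => (hm i).nnnorm.coe_nnreal_ennreal) (measurableSet_singleton ∞)).compl
  have hten : ∀ t, Filter.Tendsto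
      (fun N => S.indicator (fun s => ∑ m ∈ Finset.range N, h (e m) s) t) Filter.atTop
      (nhds (∑' i : ℤ, h i t)) := by
    intro t
    by_cases ht : t ∈ S
    · simp only [Set.indicator_of_mem ht]
      have hsum : Summable fun m : ℕ => h (e m) t :=
        (ht.comp_injective e.injective).congr (fun m => rfl)
      have := hsum.hasSum.tendsto_sum_nat
      rwa [e.tsum_eq (fun i => h i t)] at this
    · simp only [Set.indicator_of_notMem ht, tsum_eq_zero_of_not_summable ht]
      exact tendsto_const_nhds
  exact measurable_of_tendsto_metrizable
    (fun N => (Finset.measurable_sum _ fun m _ => hm (e m)).indicator hSm)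
    (tendsto_pi_nhds.2 hten)

lemma aesm_tsum_int' {α : Type*} [MeasurableSpace α] {μ : Measure α} {h : ℤ → α → ℂ}
    (hm : ∀ i, AEStronglyMeasurable (h i) μ) :
    AEStronglyMeasurable (fun t => ∑' i : ℤ, h i t) μ := by
  refine ⟨fun t => ∑' i : ℤ, (hm i).mk _ t,
    (measurable_tsum_int' fun i => (hm i).stronglyMeasurable_mk.measurable).stronglyMeasurable, ?_⟩
  filter_upwards [ae_all_iff.2 fun i => (hm i).ae_eq_mk] with t ht
  exact tsum_congr ht

lemma Gcorr_aesm (g : ℝ → ℂ) (a b : ℝ) (hg : MemLp g 2 volume) (k : ℤ) :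
    AEStronglyMeasurable (Gcorr g a b k) volume := by
  apply aesm_tsum_int'
  intro n
  have hga : AEStronglyMeasurable g volume := hg.aestronglyMeasurable
  have h1 : AEStronglyMeasurable (fun t : ℝ => g (t - (n : ℝ) * a)) volume :=
    hga.comp_quasiMeasurePreserving
      (measurePreserving_sub_right volume ((n : ℝ) * a)).quasiMeasurePreserving
  have h2 : AEStronglyMeasurable (fun t : ℝ => g (t - (n : ℝ) * a - (k : ℝ) / b)) volume := by
    have := hga.comp_quasiMeasurePreserving
      (measurePreserving_sub_right volume ((n : ℝ) * a + (k : ℝ) / b)).quasiMeasurePreserving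
    simp only [sub_sub]
    exact this
  simp only [starRingEnd_apply]
  exact h1.mul (continuous_star.comp_aestronglyMeasurable h2)

lemma Gcorr_nnnorm_shift (g : ℝ → ℂ) (a b : ℝ) (k : ℤ) (t : ℝ) :
    ‖Gcorr g a b k (t + (k : ℝ) / b)‖₊ = ‖Gcorr g a b (-k) t‖₊ := by
  conv_rhs => rw [← nnnorm_star]
  congr 1
  unfold Gcorr
  rw [tsum_star]
  refine tsum_congr fun n => ?_
  have e1 : t + (k:ℝ)/b - (n:ℝ)*a = t - (n:ℝ)*a + (k:ℝ)/b := by ring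
  have e2 : t + (k:ℝ)/b - (n:ℝ)*a - (k:ℝ)/b = t - (n:ℝ)*a := by ring
  have e3 : t - (n:ℝ)*a - ((-k : ℤ):ℝ)/b = t - (n:ℝ)*a + (k:ℝ)/b := by push_cast; ring
  rw [e2, e1, e3, starRingEnd_apply, starRingEnd_apply, star_mul', star_star, mul_comm]

/-- **Lemma 1.3.** For `g ∈ L²(ℝ)` and bounded, compactly supported `f`,
`∑_k ∫ |conj(f(t)) f(t-k/b) ∑_n g(t-na) conj(g(t-na-k/b))| dt
  ≤ ∫ |f(t)|² ∑_k |G_k(t)| dt`. -/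
theorem sum_integral_le (g f : ℝ → ℂ) (a b : ℝ) (ha : 0 < a) (hb : 0 < b)
    (hg : MemLp g 2 volume) (hf : MemLp f 2 volume)
    (hfbdd : ∃ M : ℝ, ∀ t : ℝ, ‖f t‖ ≤ M) (hfc : HasCompactSupport f) :
    ∑' k : ℤ, ∫⁻ t : ℝ, (‖(starRingEnd ℂ) (f t) * f (t - (k : ℝ) / b) *
        ∑' n : ℤ, g (t - (n : ℝ) * a) *
          (starRingEnd ℂ) (g (t - (n : ℝ) * a - (k : ℝ) / b))‖₊ : ℝ≥0∞)
      ≤ ∫⁻ t : ℝ, (‖f t‖₊ : ℝ≥0∞) ^ 2 *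
          ∑' k : ℤ, (‖∑' n : ℤ, g (t - (n : ℝ) * a) *
            (starRingEnd ℂ) (g (t - (n : ℝ) * a - (k : ℝ) / b))‖₊ : ℝ≥0∞) := by
  classical
  have hfm : AEMeasurable (fun t => (‖f t‖₊ : ℝ≥0∞)) volume :=
    hf.aestronglyMeasurable.aemeasurable.nnnorm.coe_nnreal_ennreal
  have hGm : ∀ k : ℤ, AEStronglyMeasurable (Gcorr g a b k) volume := Gcorr_aesm g a b hg
  have half : ∀ x y : ℝ≥0∞, x * 2 ≤ y → x ≤ y * 2⁻¹ := by
    intro x y h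
    have := mul_le_mul_left h (2⁻¹ : ℝ≥0∞)
    rwa [mul_assoc, ENNReal.mul_inv_cancel two_ne_zero ENNReal.ofNat_ne_top, mul_one] at this
  show ∑' k : ℤ, ∫⁻ t : ℝ, (‖(starRingEnd ℂ) (f t) * f (t - (k : ℝ) / b) *
        Gcorr g a b k t‖₊ : ℝ≥0∞)
      ≤ ∫⁻ t : ℝ, (‖f t‖₊ : ℝ≥0∞) ^ 2 * ∑' k : ℤ, (‖Gcorr g a b k t‖₊ : ℝ≥0∞)
  set X : ℤ → ℝ≥0∞ := fun k => ∫⁻ t : ℝ, (‖f t‖₊ : ℝ≥0∞) ^ 2 * ‖Gcorr g a b k t‖₊ with hX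
  have hXm : ∀ k : ℤ, AEMeasurable
      (fun t : ℝ => (‖f t‖₊ : ℝ≥0∞) ^ 2 * (‖Gcorr g a b k t‖₊ : ℝ≥0∞)) volume :=
    fun k => (hfm.pow_const 2).mul (hGm k).aemeasurable.nnnorm.coe_nnreal_ennreal
  have hk : ∀ k : ℤ, (∫⁻ t : ℝ, (‖(starRingEnd ℂ) (f t) * f (t - (k : ℝ) / b) *
        Gcorr g a b k t‖₊ : ℝ≥0∞)) ≤ X k * 2⁻¹ + X (-k) * 2⁻¹ := by
    intro k
    have step1 : ∀ t : ℝ, (‖(starRingEnd ℂ) (f t) * f (t - (k : ℝ) / b) *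
          Gcorr g a b k t‖₊ : ℝ≥0∞)
        ≤ (‖f t‖₊ : ℝ≥0∞) ^ 2 * ‖Gcorr g a b k t‖₊ * 2⁻¹
          + (‖f (t - (k : ℝ) / b)‖₊ : ℝ≥0∞) ^ 2 * ‖Gcorr g a b k t‖₊ * 2⁻¹ := by
      intro t
      set A := ‖f t‖₊ with hA
      set B := ‖f (t - (k : ℝ) / b)‖₊ with hB
      set C := ‖Gcorr g a b k t‖₊ with hC
      rw [← add_mul]
      apply half
      have hnn : ‖(starRingEnd ℂ) (f t) * f (t - (k : ℝ) / b) * Gcorr g a b k t‖₊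
          = A * B * C := by
        rw [nnnorm_mul, nnnorm_mul, starRingEnd_apply, nnnorm_star]
      rw [hnn]
      have hle : A * B * C * 2 ≤ A ^ 2 * C + B ^ 2 * C := by
        rw [← NNReal.coe_le_coe]
        push_cast
        nlinarith [sq_nonneg ((A : ℝ) - B), C.coe_nonneg, A.coe_nonneg, B.coe_nonneg]
      calc ((A * B * C : ℝ≥0) : ℝ≥0∞) * 2 = ((A * B * C * 2 : ℝ≥0) : ℝ≥0∞) := by
            push_cast; ring
        _ ≤ ((A ^ 2 * C + B ^ 2 * C : ℝ≥0) : ℝ≥0∞) := ENNReal.coe_le_coe.2 hle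
        _ = (A : ℝ≥0∞) ^ 2 * C + (B : ℝ≥0∞) ^ 2 * C := by push_cast; ring
    calc (∫⁻ t : ℝ, (‖(starRingEnd ℂ) (f t) * f (t - (k : ℝ) / b) *
            Gcorr g a b k t‖₊ : ℝ≥0∞))
        ≤ ∫⁻ t : ℝ, ((‖f t‖₊ : ℝ≥0∞) ^ 2 * ‖Gcorr g a b k t‖₊ * 2⁻¹
            + (‖f (t - (k : ℝ) / b)‖₊ : ℝ≥0∞) ^ 2 * ‖Gcorr g a b k t‖₊ * 2⁻¹) :=
          lintegral_mono step1
      _ = (∫⁻ t : ℝ, (‖f t‖₊ : ℝ≥0∞) ^ 2 * ‖Gcorr g a b k t‖₊ * 2⁻¹)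
            + ∫⁻ t : ℝ, (‖f (t - (k : ℝ) / b)‖₊ : ℝ≥0∞) ^ 2 * ‖Gcorr g a b k t‖₊ * 2⁻¹ :=
          lintegral_add_left' ((hXm k).mul_const _) _
      _ = X k * 2⁻¹ + X (-k) * 2⁻¹ := by
          congr 1
          · rw [hX]
            exact lintegral_mul_const' _ _ (by simp)
          · have hpt : ∀ t : ℝ, (‖f (t - (k : ℝ) / b)‖₊ : ℝ≥0∞) ^ 2
                  * (‖Gcorr g a b k t‖₊ : ℝ≥0∞) * 2⁻¹
                = (fun s : ℝ => (‖f s‖₊ : ℝ≥0∞) ^ 2 * (‖Gcorr g a b (-k) s‖₊ : ℝ≥0∞) * 2⁻¹)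
                  (t - (k : ℝ) / b) := by
              intro t
              simp only
              rw [← Gcorr_nnnorm_shift g a b k (t - (k : ℝ) / b), sub_add_cancel]
            rw [lintegral_congr hpt,
              lintegral_sub_right_eq_self
                (fun s : ℝ => (‖f s‖₊ : ℝ≥0∞) ^ 2 * (‖Gcorr g a b (-k) s‖₊ : ℝ≥0∞) * 2⁻¹)
                ((k : ℝ) / b), hX]
            exact lintegral_mul_const' _ _ (by simp)
  calc ∑' k : ℤ, ∫⁻ t : ℝ, (‖(starRingEnd ℂ) (f t) * f (t - (k : ℝ) / b) *
          Gcorr g a b k t‖₊ : ℝ≥0∞)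
      ≤ ∑' k : ℤ, (X k * 2⁻¹ + X (-k) * 2⁻¹) := ENNReal.tsum_le_tsum hk
    _ = (∑' k : ℤ, X k * 2⁻¹) + ∑' k : ℤ, X (-k) * 2⁻¹ := ENNReal.tsum_add
    _ = (∑' k : ℤ, X k) * 2⁻¹ + (∑' k : ℤ, X (-k)) * 2⁻¹ := by
        rw [ENNReal.tsum_mul_right, ENNReal.tsum_mul_right]
    _ = (∑' k : ℤ, X k) * 2⁻¹ + (∑' k : ℤ, X k) * 2⁻¹ := by
        have : (∑' k : ℤ, X (-k)) = ∑' k : ℤ, X k := (Equiv.neg ℤ).tsum_eq X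
        rw [this]
    _ = ∑' k : ℤ, X k := by
        rw [← mul_add, ENNReal.inv_two_add_inv_two, mul_one]
    _ = ∫⁻ t : ℝ, ∑' k : ℤ, (‖f t‖₊ : ℝ≥0∞) ^ 2 * (‖Gcorr g a b k t‖₊ : ℝ≥0∞) :=
        (lintegral_tsum hXm).symm
    _ = ∫⁻ t : ℝ, (‖f t‖₊ : ℝ≥0∞) ^ 2 * ∑' k : ℤ, (‖Gcorr g a b k t‖₊ : ℝ≥0∞) :=
        lintegral_congr fun t => ENNReal.tsum_mul_left


end
end

section
/- Let (f_i)_{i∈I} be a frame for a Hilbert space H with frame bounds A, B, let (g_i)_{i∈I} be a family in H, and suppose there exists a constant R with 0 ≤ R < A such that Σ_{i∈I} |⟨f, f_i − g_i⟩|² ≤ R‖f‖² for all f ∈ H. Then (g_i)_{i∈I} is a frame for H with frame bounds A(1−√(R/A))² and B(1+√(R/B))². -/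
open scoped InnerProductSpace

lemma frame_perturbation_key1 (A R : ℝ) (hA : 0 < A) (hR0 : 0 ≤ R) :
    A * (1 - Real.sqrt (R / A)) ^ 2 = (Real.sqrt A - Real.sqrt R) ^ 2 := by
  rw [Real.sqrt_div hR0]
  have h2 : Real.sqrt A * Real.sqrt A = A := Real.mul_self_sqrt hA.le
  have hsA : Real.sqrt A ≠ 0 := by positivity
  field_simp
  rw [Real.sq_sqrt hA.le]

lemma frame_perturbation_key2 (B R : ℝ) (hB : 0 < B) (hR0 : 0 ≤ R) :
    B * (1 + Real.sqrt (R / B)) ^ 2 = (Real.sqrt B + Real.sqrt R) ^ 2 := by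
  rw [Real.sqrt_div hR0]
  have h2 : Real.sqrt B * Real.sqrt B = B := Real.mul_self_sqrt hB.le
  have hsB : Real.sqrt B ≠ 0 := by positivity
  field_simp
  rw [Real.sq_sqrt hB.le]

lemma frame_perturbation_low (A R nx c : ℝ) (hA : 0 < A) (hR0 : 0 ≤ R) (hRA : R < A)
    (hnx : 0 ≤ nx) (h : (Real.sqrt A - Real.sqrt R) * nx ≤ c) :
    A * (1 - Real.sqrt (R / A)) ^ 2 * nx ^ 2 ≤ c ^ 2 := by
  rw [frame_perturbation_key1 A R hA hR0]
  have hAR : 0 ≤ Real.sqrt A - Real.sqrt R := sub_nonneg.2 (Real.sqrt_le_sqrt hRA.le)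
  calc (Real.sqrt A - Real.sqrt R) ^ 2 * nx ^ 2 = ((Real.sqrt A - Real.sqrt R) * nx) ^ 2 := by
        ring
    _ ≤ c ^ 2 := pow_le_pow_left₀ (mul_nonneg hAR hnx) h 2

lemma frame_perturbation_high (B R c nx : ℝ) (hB : 0 < B) (hR0 : 0 ≤ R)
    (hc : 0 ≤ c) (h : c ≤ (Real.sqrt B + Real.sqrt R) * nx) :
    c ^ 2 ≤ B * (1 + Real.sqrt (R / B)) ^ 2 * nx ^ 2 := by
  rw [frame_perturbation_key2 B R hB hR0]
  calc c ^ 2 ≤ ((Real.sqrt B + Real.sqrt R) * nx) ^ 2 := pow_le_pow_left₀ hc h 2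
    _ = (Real.sqrt B + Real.sqrt R) ^ 2 * nx ^ 2 := by ring

/-- **Theorem (Christensen–Heil).** If `(f_i)` is a frame with bounds `A, B` and there is
`0 ≤ R < A` with `∑_i |⟨f, f_i - g_i⟩|² ≤ R‖f‖²` for all `f`, then `(g_i)` is a frame with
bounds `A(1-√(R/A))²` and `B(1+√(R/B))²`. -/
theorem frame_perturbation {H : Type*} [NormedAddCommGroup H] [InnerProductSpace ℂ H]
    {I : Type*} (f g : I → H) (A B R : ℝ) (hA : 0 < A) (hB : 0 < B)
    (hframe : ∀ x : H,
      Summable (fun i : I => ‖⟪x, f i⟫_ℂ‖ ^ 2) ∧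
      A * ‖x‖ ^ 2 ≤ (∑' i : I, ‖⟪x, f i⟫_ℂ‖ ^ 2) ∧
      (∑' i : I, ‖⟪x, f i⟫_ℂ‖ ^ 2) ≤ B * ‖x‖ ^ 2)
    (hR0 : 0 ≤ R) (hRA : R < A)
    (hpert : ∀ x : H,
      Summable (fun i : I => ‖⟪x, f i - g i⟫_ℂ‖ ^ 2) ∧
      (∑' i : I, ‖⟪x, f i - g i⟫_ℂ‖ ^ 2) ≤ R * ‖x‖ ^ 2) :
    ∀ x : H,
      Summable (fun i : I => ‖⟪x, g i⟫_ℂ‖ ^ 2) ∧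
      A * (1 - Real.sqrt (R / A)) ^ 2 * ‖x‖ ^ 2 ≤ (∑' i : I, ‖⟪x, g i⟫_ℂ‖ ^ 2) ∧
      (∑' i : I, ‖⟪x, g i⟫_ℂ‖ ^ 2) ≤ B * (1 + Real.sqrt (R / B)) ^ 2 * ‖x‖ ^ 2 := by
  intro x
  obtain ⟨hu_s, hu_lo, hu_hi⟩ := hframe x
  obtain ⟨hw_s, hw_hi⟩ := hpert x
  have h2 : (0:ℝ) < (2 : ENNReal).toReal := by norm_num
  have hcast : ∀ (y : ℝ), y ^ (2 : ENNReal).toReal = y ^ 2 := by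
    intro y
    rw [show ((2 : ENNReal).toReal) = ((2:ℕ):ℝ) by norm_num, Real.rpow_natCast]
  have hUm : Memℓp (fun i : I => ⟪x, f i⟫_ℂ) 2 := memℓp_gen (by simpa [hcast] using hu_s)
  have hWm : Memℓp (fun i : I => ⟪x, f i - g i⟫_ℂ) 2 := memℓp_gen (by simpa [hcast] using hw_s)
  set U : lp (fun _ : I => ℂ) 2 := ⟨_, hUm⟩ with hU
  set W : lp (fun _ : I => ℂ) 2 := ⟨_, hWm⟩ with hW
  have hVm : Memℓp (fun i : I => ⟪x, g i⟫_ℂ) 2 := by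
    have : (fun i : I => ⟪x, g i⟫_ℂ) = (fun i : I => ⟪x, f i⟫_ℂ) - (fun i : I => ⟪x, f i - g i⟫_ℂ) := by
      funext i; simp [inner_sub_right]
    rw [this]
    exact hUm.sub hWm
  set V : lp (fun _ : I => ℂ) 2 := ⟨_, hVm⟩ with hV
  have hsum : Summable (fun i : I => ‖⟪x, g i⟫_ℂ‖ ^ 2) := by
    have := hVm.summable h2
    simpa [hcast] using this
  refine ⟨hsum, ?_⟩
  have hUVW : U = V + W := by
    apply Subtype.ext
    funext i
    show ⟪x, f i⟫_ℂ = ⟪x, g i⟫_ℂ + ⟪x, f i - g i⟫_ℂ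
    rw [inner_sub_right]; ring
  have hnU : ‖U‖ ^ 2 = ∑' i : I, ‖⟪x, f i⟫_ℂ‖ ^ 2 := by
    have := lp.norm_rpow_eq_tsum h2 U
    simpa [hcast, hU] using this
  have hnW : ‖W‖ ^ 2 = ∑' i : I, ‖⟪x, f i - g i⟫_ℂ‖ ^ 2 := by
    have := lp.norm_rpow_eq_tsum h2 W
    simpa [hcast, hW] using this
  have hnV : ‖V‖ ^ 2 = ∑' i : I, ‖⟪x, g i⟫_ℂ‖ ^ 2 := by
    have := lp.norm_rpow_eq_tsum h2 V
    simpa [hcast, hV] using this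
  -- scalar bounds
  have haU : Real.sqrt A * ‖x‖ ≤ ‖U‖ := by
    have h1 : Real.sqrt (A * ‖x‖ ^ 2) ≤ Real.sqrt (‖U‖ ^ 2) :=
      Real.sqrt_le_sqrt (by rw [hnU]; exact hu_lo)
    calc Real.sqrt A * ‖x‖ = Real.sqrt (A * ‖x‖ ^ 2) := by
          rw [Real.sqrt_mul hA.le, Real.sqrt_sq (norm_nonneg x)]
      _ ≤ Real.sqrt (‖U‖ ^ 2) := h1
      _ = ‖U‖ := Real.sqrt_sq (norm_nonneg _)
  have hbW : ‖W‖ ≤ Real.sqrt R * ‖x‖ := by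
    have h1 : Real.sqrt (‖W‖ ^ 2) ≤ Real.sqrt (R * ‖x‖ ^ 2) :=
      Real.sqrt_le_sqrt (by rw [hnW]; exact hw_hi)
    calc ‖W‖ = Real.sqrt (‖W‖ ^ 2) := (Real.sqrt_sq (norm_nonneg _)).symm
      _ ≤ Real.sqrt (R * ‖x‖ ^ 2) := h1
      _ = Real.sqrt R * ‖x‖ := by rw [Real.sqrt_mul hR0, Real.sqrt_sq (norm_nonneg x)]
  have hbU : ‖U‖ ≤ Real.sqrt B * ‖x‖ := by
    have h1 : Real.sqrt (‖U‖ ^ 2) ≤ Real.sqrt (B * ‖x‖ ^ 2) :=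
      Real.sqrt_le_sqrt (by rw [hnU]; exact hu_hi)
    calc ‖U‖ = Real.sqrt (‖U‖ ^ 2) := (Real.sqrt_sq (norm_nonneg _)).symm
      _ ≤ Real.sqrt (B * ‖x‖ ^ 2) := h1
      _ = Real.sqrt B * ‖x‖ := by rw [Real.sqrt_mul hB.le, Real.sqrt_sq (norm_nonneg x)]
  have hVlow : (Real.sqrt A - Real.sqrt R) * ‖x‖ ≤ ‖V‖ := by
    have ht : ‖U‖ ≤ ‖V‖ + ‖W‖ := by rw [hUVW]; exact norm_add_le _ _
    have := sub_mul (Real.sqrt A) (Real.sqrt R) ‖x‖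
    linarith
  have hVhigh : ‖V‖ ≤ (Real.sqrt B + Real.sqrt R) * ‖x‖ := by
    have ht : ‖V‖ ≤ ‖U‖ + ‖W‖ := by
      have : V = U - W := eq_sub_of_add_eq hUVW.symm
      rw [this]; exact norm_sub_le _ _
    have := add_mul (Real.sqrt B) (Real.sqrt R) ‖x‖
    linarith
  have hAR : 0 ≤ Real.sqrt A - Real.sqrt R := by
    have := Real.sqrt_le_sqrt hRA.le
    linarith
  constructor
  · rw [← hnV]
    exact frame_perturbation_low A R ‖x‖ ‖V‖ hA hR0 hRA (norm_nonneg x) hVlow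
  · rw [← hnV]
    exact frame_perturbation_high B R ‖V‖ ‖x‖ hB hR0 (norm_nonneg _) hVhigh
end

section
/- Let g, h ∈ L²(ℝ) and let a, b > 0 with ab rational. If ess sup_{x∈ℝ} Σ_{k,n∈ℤ} |(g−h)(x − na − k/b)|² < ∞, then g = h almost everywhere. -/
open MeasureTheory
open scoped ENNReal NNReal

lemma tile_lemma {T : ℝ} (hT : 0 < T) (F : ℝ → ℝ≥0∞) (c : ℝ) :
    ∑' k : ℤ, ∫⁻ x in Set.Ioc 0 T, F (x - c - (k : ℝ) * T) ∂volume
      = ∫⁻ x, F x ∂volume := by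
  have hfd := isAddFundamentalDomain_Ioc hT 0 volume
  have inj : Function.Injective (fun k : ℤ => k • T) :=
    (zsmul_left_strictMono hT).injective
  obtain ⟨e, he⟩ : ∃ e : ℤ ≃ AddSubgroup.zmultiples T,
      ∀ k : ℤ, ((e k : AddSubgroup.zmultiples T) : ℝ) = (k : ℝ) * T := by
    refine ⟨Equiv.ofBijective (fun k => ⟨k • T, AddSubgroup.zsmul_mem_zmultiples T k⟩)
      ⟨fun k l hkl => inj (congrArg Subtype.val hkl),
        fun γ => by
          obtain ⟨k, hk⟩ := AddSubgroup.mem_zmultiples_iff.mp γ.2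
          exact ⟨k, Subtype.ext hk⟩⟩, fun k => zsmul_eq_mul T k⟩
  calc ∑' k : ℤ, ∫⁻ x in Set.Ioc 0 T, F (x - c - (k : ℝ) * T) ∂volume
      = ∑' k : ℤ, ∫⁻ x in Set.Ioc 0 (0 + T), F ((-(e k) +ᵥ x) - c) ∂volume := by
        refine tsum_congr fun k => ?_
        rw [zero_add]
        refine setLIntegral_congr_fun measurableSet_Ioc
          (fun x _ => ?_)
        have hek := he k
        have : ((-(e k) : AddSubgroup.zmultiples T) +ᵥ x : ℝ) = x - (k : ℝ) * T := by
          have : ((-(e k) : AddSubgroup.zmultiples T) : ℝ) = -((k : ℝ) * T) := by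
            rw [← hek]; rfl
          show ((-(e k) : AddSubgroup.zmultiples T) : ℝ) + x = x - (k : ℝ) * T
          rw [this]; ring
        rw [this]
        congr 1
        ring
    _ = ∑' γ : AddSubgroup.zmultiples T,
          ∫⁻ x in Set.Ioc 0 (0 + T), F ((-γ +ᵥ x) - c) ∂volume :=
        e.tsum_eq fun γ => ∫⁻ x in Set.Ioc 0 (0 + T), F ((-γ +ᵥ x) - c) ∂volume
    _ = ∫⁻ x, F (x - c) ∂volume := (hfd.lintegral_eq_tsum' fun y => F (y - c)).symm
    _ = ∫⁻ x, F x ∂volume := lintegral_sub_right_eq_self F c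


/-- If `a`, `b > 0` with `ab` rational and
`ess sup_x ∑_{k,n} |(g-h)(x - na - k/b)|² < ⊤`, then `g = h` a.e. -/
theorem rational_ab_double_sum_bounded (g h : ℝ → ℂ) (a b : ℝ) (ha : 0 < a) (hb : 0 < b)
    (hg : MemLp g 2 volume) (hh : MemLp h 2 volume)
    (hrat : ∃ q : ℚ, a * b = (q : ℝ))
    (hbdd : essSup
        (fun x : ℝ => ∑' p : ℤ × ℤ,
          (‖g (x - (p.2 : ℝ) * a - (p.1 : ℝ) / b) -
              h (x - (p.2 : ℝ) * a - (p.1 : ℝ) / b)‖₊ : ℝ≥0∞) ^ 2) volume < ⊤) :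
    g =ᵐ[volume] h := by
  set F : ℝ → ℝ≥0∞ := fun x => (‖g x - h x‖₊ : ℝ≥0∞) ^ 2 with hF_def
  have hF : AEMeasurable F volume := by
    have : AEStronglyMeasurable (fun x => g x - h x) volume :=
      hg.aestronglyMeasurable.sub hh.aestronglyMeasurable
    exact this.enorm.pow_const 2
  set T : ℝ := 1 / b with hT_def
  have hT : 0 < T := by positivity
  set I : Set ℝ := Set.Ioc 0 T with hI_def
  set C : ℝ≥0∞ := essSup
      (fun x : ℝ => ∑' p : ℤ × ℤ,
        (‖g (x - (p.2 : ℝ) * a - (p.1 : ℝ) / b) -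
            h (x - (p.2 : ℝ) * a - (p.1 : ℝ) / b)‖₊ : ℝ≥0∞) ^ 2) volume with hC_def
  have hbound : ∫⁻ x in I, (∑' p : ℤ × ℤ, F (x - (p.2 : ℝ) * a - (p.1 : ℝ) / b)) ∂volume
      ≤ C * volume I := by
    calc ∫⁻ x in I, (∑' p : ℤ × ℤ, F (x - (p.2 : ℝ) * a - (p.1 : ℝ) / b)) ∂volume
        ≤ ∫⁻ _ in I, C ∂volume := by
          refine lintegral_mono_ae (ae_restrict_of_ae ?_)
          filter_upwards [ENNReal.ae_le_essSup
            (fun x : ℝ => ∑' p : ℤ × ℤ,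
              (‖g (x - (p.2 : ℝ) * a - (p.1 : ℝ) / b) -
                  h (x - (p.2 : ℝ) * a - (p.1 : ℝ) / b)‖₊ : ℝ≥0∞) ^ 2)] with x hx
          exact hx
      _ = C * volume I := setLIntegral_const I C
  have hvolI : volume I < ⊤ := by
    rw [hI_def, Real.volume_Ioc]
    exact ENNReal.ofReal_lt_top
  have hfin : ∫⁻ x in I, (∑' p : ℤ × ℤ, F (x - (p.2 : ℝ) * a - (p.1 : ℝ) / b)) ∂volume < ⊤ :=
    lt_of_le_of_lt hbound (ENNReal.mul_lt_top hbdd hvolI)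
  have hmeas : ∀ p : ℤ × ℤ,
      AEMeasurable (fun x => F (x - (p.2 : ℝ) * a - (p.1 : ℝ) / b)) (volume.restrict I) := by
    intro p
    have h1 : AEMeasurable (fun x => F (x - ((p.2 : ℝ) * a + (p.1 : ℝ) / b))) volume :=
      hF.comp_quasiMeasurePreserving
        (measurePreserving_sub_right volume ((p.2 : ℝ) * a + (p.1 : ℝ) / b)).quasiMeasurePreserving
    have h2 : (fun x : ℝ => F (x - (p.2 : ℝ) * a - (p.1 : ℝ) / b))
        = fun x => F (x - ((p.2 : ℝ) * a + (p.1 : ℝ) / b)) := by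
      funext x; ring_nf
    rw [h2]
    exact h1.restrict
  have hswap : ∫⁻ x in I, (∑' p : ℤ × ℤ, F (x - (p.2 : ℝ) * a - (p.1 : ℝ) / b)) ∂volume
      = ∑' p : ℤ × ℤ, ∫⁻ x in I, F (x - (p.2 : ℝ) * a - (p.1 : ℝ) / b) ∂volume :=
    lintegral_tsum hmeas
  have htile : ∀ n : ℤ,
      ∑' k : ℤ, ∫⁻ x in I, F (x - (n : ℝ) * a - (k : ℝ) / b) ∂volume = ∫⁻ x, F x ∂volume := by
    intro n
    have h0 := tile_lemma hT F ((n : ℝ) * a)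
    rw [← h0]
    refine tsum_congr fun k => ?_
    congr 1
    funext x
    congr 1
    rw [hT_def]
    ring
  have hprod : ∑' p : ℤ × ℤ, ∫⁻ x in I, F (x - (p.2 : ℝ) * a - (p.1 : ℝ) / b) ∂volume
      = ∑' k : ℤ, ∑' n : ℤ, ∫⁻ x in I, F (x - (n : ℝ) * a - (k : ℝ) / b) ∂volume :=
    ENNReal.tsum_prod (f := fun (k : ℤ) (n : ℤ) => ∫⁻ x in I, F (x - (n : ℝ) * a - (k : ℝ) / b) ∂volume)
  have hcomm : ∑' k : ℤ, ∑' n : ℤ, ∫⁻ x in I, F (x - (n : ℝ) * a - (k : ℝ) / b) ∂volume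
      = ∑' n : ℤ, ∑' k : ℤ, ∫⁻ x in I, F (x - (n : ℝ) * a - (k : ℝ) / b) ∂volume :=
    ENNReal.tsum_comm (f := fun (k : ℤ) (n : ℤ) => ∫⁻ x in I, F (x - (n : ℝ) * a - (k : ℝ) / b) ∂volume)
  have hsum : ∑' p : ℤ × ℤ, ∫⁻ x in I, F (x - (p.2 : ℝ) * a - (p.1 : ℝ) / b) ∂volume
      = ∑' _ : ℤ, ∫⁻ x, F x ∂volume := by
    rw [hprod, hcomm]
    exact tsum_congr htile
  have hzero : ∫⁻ x, F x ∂volume = 0 := by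
    by_contra hne
    have htop : (∑' _ : ℤ, ∫⁻ x, F x ∂volume) = ⊤ :=
      ENNReal.tsum_const_eq_top_of_ne_zero hne
    rw [hswap, hsum, htop] at hfin
    exact absurd hfin (lt_irrefl ⊤)
  have hFzero : F =ᵐ[volume] 0 := (lintegral_eq_zero_iff' hF).mp hzero
  filter_upwards [hFzero] with x hx
  have h1 : (‖g x - h x‖₊ : ℝ≥0∞) ^ 2 = 0 := hx
  have h3 : (‖g x - h x‖₊ : ℝ≥0∞) = 0 := by
    simpa [pow_eq_zero_iff] using h1
  have h4 : g x - h x = 0 := by simpa using h3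
  exact sub_eq_zero.mp h4
end

section
/- Fix 0 < ε < 1 and let g = χ_{[0,1]} + (1−ε)χ_{[1,2]} ∈ L²(ℝ). Then for every finitely supported sequence of scalars (a_{mn})_{m,n∈ℤ}, ‖ Σ_{m,n∈ℤ} a_{mn} E_m T_n g ‖ ≥ ε ( Σ_{m,n∈ℤ} |a_{mn}|² )^{1/2}. In particular, (E_m T_n g)_{m,n∈ℤ} is a Riesz basic sequence with lower Riesz bound ε². -/
open MeasureTheory Set
open scoped ENNReal NNReal

noncomputable section

open Complex intervalIntegral

def rbE (k : ℤ) : ℝ → ℂ := fun t => Complex.exp (2 * (Real.pi:ℂ) * Complex.I * (k:ℂ) * (t:ℂ))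

def rbG (r : ℝ) : ℝ → ℂ := fun t =>
  Set.indicator (Set.Icc (0 : ℝ) 1) (fun _ => (1 : ℂ)) t +
    (r : ℂ) * Set.indicator (Set.Icc (1 : ℝ) 2) (fun _ => (1 : ℂ)) t

lemma ind_mul_ind (S T : Set ℝ) (t : ℝ) :
    S.indicator (fun _ => (1:ℂ)) t * T.indicator (fun _ => (1:ℂ)) t
      = (S ∩ T).indicator (fun _ => (1:ℂ)) t := by
  by_cases hS : t ∈ S <;> by_cases hT : t ∈ T <;>
    simp [hS, hT, Set.indicator_apply, Set.mem_inter_iff]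

lemma mul_ind (f : ℝ → ℂ) (S : Set ℝ) (t : ℝ) :
    f t * S.indicator (fun _ => (1:ℂ)) t = S.indicator f t := by
  by_cases hS : t ∈ S <;> simp [hS, Set.indicator_apply]

lemma ind_shift (a b s t : ℝ) :
    (Set.Icc a b).indicator (fun _ => (1:ℂ)) (t - s)
      = (Set.Icc (a+s) (b+s)).indicator (fun _ => (1:ℂ)) t := by
  simp only [Set.indicator_apply, Set.mem_Icc]
  congr 1
  simp only [eq_iff_iff]
  constructor <;> (rintro ⟨h1, h2⟩; constructor <;> linarith)

lemma conj_rbG (r : ℝ) (s : ℝ) : (starRingEnd ℂ) (rbG r s) = rbG r s := by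
  by_cases h1 : s ∈ Set.Icc (0:ℝ) 1 <;> by_cases h2 : s ∈ Set.Icc (1:ℝ) 2 <;>
    simp [rbG, h1, h2]

lemma gabor_prod (r : ℝ) (m n m' n' : ℤ) (t : ℝ) :
    gabor (rbG r) 1 1 m n t * (starRingEnd ℂ) (gabor (rbG r) 1 1 m' n' t) =
      (Set.Icc (max (n:ℝ) (n':ℝ)) (min ((n:ℝ)+1) ((n':ℝ)+1))).indicator (rbE (m - m')) t
      + (r:ℂ) * (Set.Icc (max (n:ℝ) ((n':ℝ)+1)) (min ((n:ℝ)+1) ((n':ℝ)+2))).indicator (rbE (m-m')) t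
      + (r:ℂ) * (Set.Icc (max ((n:ℝ)+1) (n':ℝ)) (min ((n:ℝ)+2) ((n':ℝ)+1))).indicator (rbE (m-m')) t
      + (r:ℂ)^2 * (Set.Icc (max ((n:ℝ)+1) ((n':ℝ)+1)) (min ((n:ℝ)+2) ((n':ℝ)+2))).indicator (rbE (m-m')) t := by
  have hg : ∀ (k : ℤ), rbG r (t - (k:ℝ) * 1) =
      (Set.Icc (k:ℝ) ((k:ℝ)+1)).indicator (fun _ => (1:ℂ)) t
        + (r:ℂ) * (Set.Icc ((k:ℝ)+1) ((k:ℝ)+2)).indicator (fun _ => (1:ℂ)) t := by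
    intro k
    simp only [rbG, mul_one, ind_shift]
    rw [zero_add, show (1:ℝ)+(k:ℝ) = (k:ℝ)+1 by ring, show (2:ℝ)+(k:ℝ) = (k:ℝ)+2 by ring]
  have hconj : (starRingEnd ℂ) (gabor (rbG r) 1 1 m' n' t)
      = Complex.exp (- (2 * (Real.pi:ℂ) * Complex.I * ((m':ℂ)) * (t:ℂ))) * rbG r (t - (n':ℝ) * 1) := by
    simp only [gabor, map_mul, conj_rbG, ← Complex.exp_conj]
    congr 1
    congr 1
    simp only [map_mul, Complex.conj_ofReal, Complex.conj_I, map_ofNat, map_intCast, map_one]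
    push_cast
    ring
  rw [hconj]
  simp only [gabor, hg]
  have hexp : Complex.exp (2 * (Real.pi:ℂ) * Complex.I * ((m:ℂ) * ((1:ℝ):ℂ)) * (t:ℂ)) *
      Complex.exp (- (2 * (Real.pi:ℂ) * Complex.I * ((m':ℂ)) * (t:ℂ))) = rbE (m - m') t := by
    rw [← Complex.exp_add, rbE]
    push_cast
    ring_nf
  set A := (Set.Icc (n:ℝ) ((n:ℝ)+1)).indicator (fun _ => (1:ℂ)) t
  set B := (Set.Icc ((n:ℝ)+1) ((n:ℝ)+2)).indicator (fun _ => (1:ℂ)) t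
  set A' := (Set.Icc (n':ℝ) ((n':ℝ)+1)).indicator (fun _ => (1:ℂ)) t
  set B' := (Set.Icc ((n':ℝ)+1) ((n':ℝ)+2)).indicator (fun _ => (1:ℂ)) t
  have expand : Complex.exp (2 * (Real.pi:ℂ) * Complex.I * ((m:ℂ) * ((1:ℝ):ℂ)) * (t:ℂ)) * (A + (r:ℂ) * B) *
      (Complex.exp (- (2 * (Real.pi:ℂ) * Complex.I * ((m':ℂ)) * (t:ℂ))) * (A' + (r:ℂ) * B')) =
      rbE (m - m') t * (A * A') + (r:ℂ) * (rbE (m - m') t * (A * B'))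
        + (r:ℂ) * (rbE (m - m') t * (B * A')) + (r:ℂ)^2 * (rbE (m - m') t * (B * B')) := by
    rw [show Complex.exp (2 * (Real.pi:ℂ) * Complex.I * ((m:ℂ) * ((1:ℝ):ℂ)) * (t:ℂ)) * (A + (r:ℂ) * B) *
      (Complex.exp (- (2 * (Real.pi:ℂ) * Complex.I * ((m':ℂ)) * (t:ℂ))) * (A' + (r:ℂ) * B')) =
      (Complex.exp (2 * (Real.pi:ℂ) * Complex.I * ((m:ℂ) * ((1:ℝ):ℂ)) * (t:ℂ)) *
        Complex.exp (- (2 * (Real.pi:ℂ) * Complex.I * ((m':ℂ)) * (t:ℂ)))) * ((A + (r:ℂ) * B) * (A' + (r:ℂ) * B')) from by ring,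
      hexp]
    ring
  rw [expand]
  have h1 : rbE (m - m') t * (A * A') =
      (Set.Icc (max (n:ℝ) (n':ℝ)) (min ((n:ℝ)+1) ((n':ℝ)+1))).indicator (rbE (m - m')) t := by
    rw [show A * A' = (Set.Icc (n:ℝ) ((n:ℝ)+1) ∩ Set.Icc (n':ℝ) ((n':ℝ)+1)).indicator (fun _ => (1:ℂ)) t from ind_mul_ind _ _ t,
      Set.Icc_inter_Icc, mul_ind]
  have h2 : rbE (m - m') t * (A * B') =
      (Set.Icc (max (n:ℝ) ((n':ℝ)+1)) (min ((n:ℝ)+1) ((n':ℝ)+2))).indicator (rbE (m - m')) t := by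
    rw [show A * B' = (Set.Icc (n:ℝ) ((n:ℝ)+1) ∩ Set.Icc ((n':ℝ)+1) ((n':ℝ)+2)).indicator (fun _ => (1:ℂ)) t from ind_mul_ind _ _ t,
      Set.Icc_inter_Icc, mul_ind]
  have h3 : rbE (m - m') t * (B * A') =
      (Set.Icc (max ((n:ℝ)+1) (n':ℝ)) (min ((n:ℝ)+2) ((n':ℝ)+1))).indicator (rbE (m - m')) t := by
    rw [show B * A' = (Set.Icc ((n:ℝ)+1) ((n:ℝ)+2) ∩ Set.Icc (n':ℝ) ((n':ℝ)+1)).indicator (fun _ => (1:ℂ)) t from ind_mul_ind _ _ t,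
      Set.Icc_inter_Icc, mul_ind]
  have h4 : rbE (m - m') t * (B * B') =
      (Set.Icc (max ((n:ℝ)+1) ((n':ℝ)+1)) (min ((n:ℝ)+2) ((n':ℝ)+2))).indicator (rbE (m - m')) t := by
    rw [show B * B' = (Set.Icc ((n:ℝ)+1) ((n:ℝ)+2) ∩ Set.Icc ((n':ℝ)+1) ((n':ℝ)+2)).indicator (fun _ => (1:ℂ)) t from ind_mul_ind _ _ t,
      Set.Icc_inter_Icc, mul_ind]
  rw [h1, h2, h3, h4]

lemma rbE_cont (k : ℤ) : Continuous (rbE k) := by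
  unfold rbE; fun_prop

lemma rb_intg (k : ℤ) (a b : ℝ) : Integrable ((Set.Icc a b).indicator (rbE k)) volume := by
  exact ((rbE_cont k).integrableOn_Icc).integrable_indicator measurableSet_Icc

lemma J0 (f : ℝ → ℂ) (a b : ℝ) (h : b ≤ a) :
    ∫ t : ℝ, (Set.Icc a b).indicator f t = 0 := by
  rw [MeasureTheory.integral_indicator measurableSet_Icc,
    Measure.restrict_eq_zero.mpr (by simp [Real.volume_Icc, ENNReal.ofReal_eq_zero]; linarith),
    integral_zero_measure]

lemma J1 (k : ℤ) (c : ℝ) :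
    ∫ t : ℝ, (Set.Icc c (c+1)).indicator (rbE k) t = if k = 0 then 1 else 0 := by
  rw [MeasureTheory.integral_indicator measurableSet_Icc,
    MeasureTheory.integral_Icc_eq_integral_Ioc,
    ← integral_of_le (by linarith : c ≤ c + 1)]
  unfold rbE
  by_cases hk : k = 0
  · simp [hk]
  · have hc : (2 * (Real.pi:ℂ) * Complex.I * (k:ℂ)) ≠ 0 := by
      simp [Real.pi_ne_zero, Complex.I_ne_zero, hk]
    rw [integral_exp_mul_complex hc]
    have : Complex.exp (2 * (Real.pi:ℂ) * Complex.I * (k:ℂ) * ((c:ℝ)+1:ℝ))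
        = Complex.exp (2 * (Real.pi:ℂ) * Complex.I * (k:ℂ) * (c:ℂ)) := by
      push_cast
      rw [mul_add, Complex.exp_add, mul_one]
      have : Complex.exp (2 * (Real.pi:ℂ) * Complex.I * (k:ℂ)) = 1 := by
        rw [show 2 * (Real.pi:ℂ) * Complex.I * (k:ℂ) = (k:ℂ) * (2 * (Real.pi:ℂ) * Complex.I) by ring]
        exact Complex.exp_int_mul_two_pi_mul_I k
      rw [this, mul_one]
    rw [this]
    simp [hk]

lemma Jint (k u v : ℤ) (h : v ≤ u + 1) :
    ∫ t : ℝ, (Set.Icc (u:ℝ) (v:ℝ)).indicator (rbE k) t = if k = 0 ∧ v = u + 1 then 1 else 0 := by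
  by_cases hv : v = u + 1
  · subst hv
    push_cast
    rw [J1 k (u:ℝ)]
    simp
  · have hvu : (v:ℝ) ≤ (u:ℝ) := by exact_mod_cast (by omega : v ≤ u)
    rw [J0 _ _ _ hvu]
    simp [hv]

lemma gram (r : ℝ) (m n m' n' : ℤ) :
    ∫ t : ℝ, gabor (rbG r) 1 1 m n t * (starRingEnd ℂ) (gabor (rbG r) 1 1 m' n' t)
      = (if m' = m ∧ n' = n then 1 + (r:ℂ)^2 else 0)
        + (if m' = m ∧ n' = n - 1 then (r:ℂ) else 0)
        + (if m' = m ∧ n' = n + 1 then (r:ℂ) else 0) := by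
  have c1 : Set.Icc (max (n:ℝ) (n':ℝ)) (min ((n:ℝ)+1) ((n':ℝ)+1))
      = Set.Icc ((max n n' : ℤ):ℝ) ((min (n+1) (n'+1) : ℤ):ℝ) := by push_cast; rfl
  have c2 : Set.Icc (max (n:ℝ) ((n':ℝ)+1)) (min ((n:ℝ)+1) ((n':ℝ)+2))
      = Set.Icc ((max n (n'+1) : ℤ):ℝ) ((min (n+1) (n'+2) : ℤ):ℝ) := by push_cast; rfl
  have c3 : Set.Icc (max ((n:ℝ)+1) (n':ℝ)) (min ((n:ℝ)+2) ((n':ℝ)+1))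
      = Set.Icc ((max (n+1) n' : ℤ):ℝ) ((min (n+2) (n'+1) : ℤ):ℝ) := by push_cast; rfl
  have c4 : Set.Icc (max ((n:ℝ)+1) ((n':ℝ)+1)) (min ((n:ℝ)+2) ((n':ℝ)+2))
      = Set.Icc ((max (n+1) (n'+1) : ℤ):ℝ) ((min (n+2) (n'+2) : ℤ):ℝ) := by push_cast; rfl
  have h1 := rb_intg (m - m') ((max n n' : ℤ):ℝ) ((min (n+1) (n'+1) : ℤ):ℝ)
  have h2 := rb_intg (m - m') ((max n (n'+1) : ℤ):ℝ) ((min (n+1) (n'+2) : ℤ):ℝ)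
  have h3 := rb_intg (m - m') ((max (n+1) n' : ℤ):ℝ) ((min (n+2) (n'+1) : ℤ):ℝ)
  have h4 := rb_intg (m - m') ((max (n+1) (n'+1) : ℤ):ℝ) ((min (n+2) (n'+2) : ℤ):ℝ)
  simp only [gabor_prod, c1, c2, c3, c4]
  set f1 := (Set.Icc ((max n n' : ℤ):ℝ) ((min (n+1) (n'+1) : ℤ):ℝ)).indicator (rbE (m - m')) with hf1
  set f2 := (Set.Icc ((max n (n'+1) : ℤ):ℝ) ((min (n+1) (n'+2) : ℤ):ℝ)).indicator (rbE (m - m')) with hf2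
  set f3 := (Set.Icc ((max (n+1) n' : ℤ):ℝ) ((min (n+2) (n'+1) : ℤ):ℝ)).indicator (rbE (m - m')) with hf3
  set f4 := (Set.Icc ((max (n+1) (n'+1) : ℤ):ℝ) ((min (n+2) (n'+2) : ℤ):ℝ)).indicator (rbE (m - m')) with hf4
  have e2 : Integrable (fun t : ℝ => (r:ℂ) * f2 t) volume := h2.const_mul _
  have e3 : Integrable (fun t : ℝ => (r:ℂ) * f3 t) volume := h3.const_mul _
  have e4 : Integrable (fun t : ℝ => (r:ℂ)^2 * f4 t) volume := h4.const_mul _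
  have E1 : Integrable (fun t : ℝ => f1 t) volume := h1
  have E12 : Integrable (fun t : ℝ => f1 t + (r:ℂ) * f2 t) volume := E1.add e2
  have E123 : Integrable (fun t : ℝ => f1 t + (r:ℂ) * f2 t + (r:ℂ) * f3 t) volume := E12.add e3
  rw [integral_add E123 e4, integral_add E12 e3, integral_add E1 e2,
    MeasureTheory.integral_const_mul, MeasureTheory.integral_const_mul, MeasureTheory.integral_const_mul, hf1, hf2, hf3, hf4,
    Jint _ _ _ (by omega), Jint _ _ _ (by omega), Jint _ _ _ (by omega), Jint _ _ _ (by omega)]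
  rw [if_congr (by omega : (m - m' = 0 ∧ min (n+1) (n'+1) = max n n' + 1) ↔ (m' = m ∧ n' = n)) rfl rfl,
    if_congr (by omega : (m - m' = 0 ∧ min (n+1) (n'+2) = max n (n'+1) + 1) ↔ (m' = m ∧ n' = n - 1)) rfl rfl,
    if_congr (by omega : (m - m' = 0 ∧ min (n+2) (n'+1) = max (n+1) n' + 1) ↔ (m' = m ∧ n' = n + 1)) rfl rfl,
    if_congr (by omega : (m - m' = 0 ∧ min (n+2) (n'+2) = max (n+1) (n'+1) + 1) ↔ (m' = m ∧ n' = n)) rfl rfl]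
  split_ifs <;> ring

lemma gram' (r : ℝ) (p q : ℤ × ℤ) :
    ∫ t : ℝ, gabor (rbG r) 1 1 p.1 p.2 t * (starRingEnd ℂ) (gabor (rbG r) 1 1 q.1 q.2 t)
      = (if q = p then 1 + (r:ℂ)^2 else 0) + (if q = (p.1, p.2 - 1) then (r:ℂ) else 0)
        + (if q = (p.1, p.2 + 1) then (r:ℂ) else 0) := by
  rw [gram r p.1 p.2 q.1 q.2]
  congr 1
  · congr 1
    · exact if_congr (by rw [Prod.ext_iff]) rfl rfl
    · exact if_congr (by rw [Prod.ext_iff]) rfl rfl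
  · exact if_congr (by rw [Prod.ext_iff]) rfl rfl

lemma rb_prod_int (r : ℝ) (m n m' n' : ℤ) :
    Integrable (fun t : ℝ => gabor (rbG r) 1 1 m n t * (starRingEnd ℂ) (gabor (rbG r) 1 1 m' n' t))
      volume := by
  have hrep : (fun t : ℝ => gabor (rbG r) 1 1 m n t * (starRingEnd ℂ) (gabor (rbG r) 1 1 m' n' t))
      = fun t =>
      (Set.Icc (max (n:ℝ) (n':ℝ)) (min ((n:ℝ)+1) ((n':ℝ)+1))).indicator (rbE (m - m')) t
      + (r:ℂ) * (Set.Icc (max (n:ℝ) ((n':ℝ)+1)) (min ((n:ℝ)+1) ((n':ℝ)+2))).indicator (rbE (m-m')) t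
      + (r:ℂ) * (Set.Icc (max ((n:ℝ)+1) (n':ℝ)) (min ((n:ℝ)+2) ((n':ℝ)+1))).indicator (rbE (m-m')) t
      + (r:ℂ)^2 * (Set.Icc (max ((n:ℝ)+1) ((n':ℝ)+1)) (min ((n:ℝ)+2) ((n':ℝ)+2))).indicator (rbE (m-m')) t :=
    funext (gabor_prod r m n m' n')
  rw [hrep]
  exact (((rb_intg _ _ _).add ((rb_intg _ _ _).const_mul _)).add
    ((rb_intg _ _ _).const_mul _)).add ((rb_intg _ _ _).const_mul _)

lemma Qval (r : ℝ) (c : (ℤ × ℤ) →₀ ℂ) :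
    ∫ t : ℝ, ‖∑ p ∈ c.support, c p * gabor (rbG r) 1 1 p.1 p.2 t‖^2
      = ∑ p ∈ c.support, ((1 + r^2) * ‖c p‖^2
          + r * (c p * (starRingEnd ℂ) (c (p.1, p.2 - 1))).re
          + r * (c p * (starRingEnd ℂ) (c (p.1, p.2 + 1))).re) := by
  classical
  set S := c.support with hS
  set F : ℝ → ℂ := fun t => ∑ p ∈ S, c p * gabor (rbG r) 1 1 p.1 p.2 t with hF
  have hrep : (fun t => F t * (starRingEnd ℂ) (F t))
      = fun t => ∑ p ∈ S, ∑ q ∈ S, (c p * (starRingEnd ℂ) (c q)) *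
          (gabor (rbG r) 1 1 p.1 p.2 t * (starRingEnd ℂ) (gabor (rbG r) 1 1 q.1 q.2 t)) := by
    funext t
    rw [hF]
    rw [map_sum, Finset.sum_mul_sum]
    apply Finset.sum_congr rfl
    intro p _
    apply Finset.sum_congr rfl
    intro q _
    rw [map_mul]
    ring
  have hint : ∀ p ∈ S, ∀ q ∈ S, Integrable (fun t : ℝ => (c p * (starRingEnd ℂ) (c q)) *
      (gabor (rbG r) 1 1 p.1 p.2 t * (starRingEnd ℂ) (gabor (rbG r) 1 1 q.1 q.2 t))) volume :=
    fun p _ q _ => (rb_prod_int r p.1 p.2 q.1 q.2).const_mul _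
  have hintF : Integrable (fun t => F t * (starRingEnd ℂ) (F t)) volume := by
    rw [hrep]
    exact integrable_finset_sum S (fun p hp => integrable_finset_sum S (fun q hq => hint p hp q hq))
  have hnorm : ∀ t, ‖F t‖^2 = (F t * (starRingEnd ℂ) (F t)).re := by
    intro t
    rw [Complex.mul_conj, Complex.ofReal_re, Complex.normSq_eq_norm_sq]
  calc ∫ t : ℝ, ‖F t‖^2 = ∫ t : ℝ, (F t * (starRingEnd ℂ) (F t)).re := by
        exact MeasureTheory.integral_congr_ae (Filter.Eventually.of_forall hnorm)
    _ = (∫ t : ℝ, F t * (starRingEnd ℂ) (F t)).re := by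
        exact integral_re hintF
    _ = (∑ p ∈ S, ∑ q ∈ S, (c p * (starRingEnd ℂ) (c q)) *
          ∫ t : ℝ, gabor (rbG r) 1 1 p.1 p.2 t * (starRingEnd ℂ) (gabor (rbG r) 1 1 q.1 q.2 t)).re := by
        congr 1
        rw [hrep, MeasureTheory.integral_finset_sum S (fun p hp =>
          integrable_finset_sum S (fun q hq => hint p hp q hq))]
        apply Finset.sum_congr rfl
        intro p hp
        rw [MeasureTheory.integral_finset_sum S (fun q hq => hint p hp q hq)]
        apply Finset.sum_congr rfl
        intro q hq
        exact MeasureTheory.integral_const_mul _ _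
    _ = ∑ p ∈ S, ((1 + r^2) * ‖c p‖^2
          + r * (c p * (starRingEnd ℂ) (c (p.1, p.2 - 1))).re
          + r * (c p * (starRingEnd ℂ) (c (p.1, p.2 + 1))).re) := by
        rw [Complex.re_sum]
        apply Finset.sum_congr rfl
        intro p hp
        have hinner : ∑ q ∈ S, (c p * (starRingEnd ℂ) (c q)) *
            ∫ t : ℝ, gabor (rbG r) 1 1 p.1 p.2 t * (starRingEnd ℂ) (gabor (rbG r) 1 1 q.1 q.2 t)
            = c p * (starRingEnd ℂ) (c p) * (1 + (r:ℂ)^2)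
              + c p * (starRingEnd ℂ) (c (p.1, p.2 - 1)) * (r:ℂ)
              + c p * (starRingEnd ℂ) (c (p.1, p.2 + 1)) * (r:ℂ) := by
          simp only [gram', mul_add, mul_ite, mul_zero, Finset.sum_add_distrib,
            Finset.sum_ite_eq' S]
          have hz : ∀ q₀ : ℤ × ℤ, (if q₀ ∈ S then c p * (starRingEnd ℂ) (c q₀) * (r:ℂ) else 0)
              = c p * (starRingEnd ℂ) (c q₀) * (r:ℂ) := by
            intro q₀
            split_ifs with h
            · rfl
            · have hz0 : c q₀ = 0 := Finsupp.notMem_support_iff.mp h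
              rw [hz0]
              simp
          rw [hz, hz]
          have hp' : p ∈ S := hp
          rw [if_pos hp']
        rw [hinner]
        have hre : (c p * (starRingEnd ℂ) (c p) * (1 + (r:ℂ)^2)).re
            = (1 + r^2) * ‖c p‖^2 := by
          rw [Complex.mul_conj]
          have : ((Complex.normSq (c p) : ℂ) * (1 + (r:ℂ)^2)) = (((Complex.normSq (c p) * (1 + r^2) : ℝ)) : ℂ) := by
            push_cast; ring
          rw [this, Complex.ofReal_re]
          simp only [Complex.normSq_eq_norm_sq]
          ring
        have hre2 : ∀ z : ℂ, (z * (r:ℂ)).re = r * z.re := by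
          intro z
          simp [Complex.mul_re, Complex.ofReal_re, Complex.ofReal_im]
          ring
        simp only [Complex.add_re, hre, hre2]

lemma rb_shift_le (c : (ℤ × ℤ) →₀ ℂ) (σ : ℤ × ℤ → ℤ × ℤ) (hσ : Function.Injective σ) :
    ∑ p ∈ c.support, ‖c (σ p)‖^2 ≤ ∑ p ∈ c.support, ‖c p‖^2 := by
  classical
  have h1 : ∑ p ∈ c.support, ‖c (σ p)‖^2 = ∑ q ∈ c.support.image σ, ‖c q‖^2 := by
    rw [Finset.sum_image (fun x _ y _ h => hσ h)]
  rw [h1]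
  have h2 : ∑ q ∈ c.support.image σ, ‖c q‖^2
      = ∑ q ∈ (c.support.image σ) ∩ c.support, ‖c q‖^2 := by
    refine (Finset.sum_subset Finset.inter_subset_left (fun x hx hnx => ?_)).symm
    have : c x = 0 := Finsupp.notMem_support_iff.mp
      (fun hmem => hnx (Finset.mem_inter.mpr ⟨hx, hmem⟩))
    simp [this]
  rw [h2]
  exact Finset.sum_le_sum_of_subset_of_nonneg Finset.inter_subset_right
    (fun q _ _ => by positivity)

lemma cross_bound (c : (ℤ × ℤ) →₀ ℂ) (σ : ℤ × ℤ → ℤ × ℤ) (hσ : Function.Injective σ) :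
    |∑ p ∈ c.support, (c p * (starRingEnd ℂ) (c (σ p))).re| ≤ ∑ p ∈ c.support, ‖c p‖^2 := by
  calc |∑ p ∈ c.support, (c p * (starRingEnd ℂ) (c (σ p))).re|
      ≤ ∑ p ∈ c.support, |(c p * (starRingEnd ℂ) (c (σ p))).re| :=
        Finset.abs_sum_le_sum_abs _ _
    _ ≤ ∑ p ∈ c.support, (‖c p‖^2 + ‖c (σ p)‖^2) / 2 := by
        apply Finset.sum_le_sum
        intro p _
        have h1 : |(c p * (starRingEnd ℂ) (c (σ p))).re| ≤ ‖c p * (starRingEnd ℂ) (c (σ p))‖ :=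
          Complex.abs_re_le_norm _
        have h2 : ‖c p * (starRingEnd ℂ) (c (σ p))‖ = ‖c p‖ * ‖c (σ p)‖ := by
          rw [norm_mul, RCLike.norm_conj]
        nlinarith [sq_nonneg (‖c p‖ - ‖c (σ p)‖), norm_nonneg (c p), norm_nonneg (c (σ p))]
    _ ≤ ∑ p ∈ c.support, ‖c p‖^2 := by
        have hsh := rb_shift_le c σ hσ
        have hsplit : ∑ p ∈ c.support, (‖c p‖^2 + ‖c (σ p)‖^2)
            = ∑ p ∈ c.support, ‖c p‖^2 + ∑ p ∈ c.support, ‖c (σ p)‖^2 :=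
          Finset.sum_add_distrib
        calc ∑ p ∈ c.support, (‖c p‖^2 + ‖c (σ p)‖^2) / 2
            = (∑ p ∈ c.support, ‖c p‖^2 + ∑ p ∈ c.support, ‖c (σ p)‖^2) / 2 := by
              rw [← Finset.sum_div, hsplit]
          _ ≤ ∑ p ∈ c.support, ‖c p‖^2 := by linarith

lemma Qbounds (r : ℝ) (hr0 : 0 ≤ r) (hr1 : r ≤ 1) (c : (ℤ × ℤ) →₀ ℂ) :
    (1-r)^2 * (∑ p ∈ c.support, ‖c p‖^2)
      ≤ (∫ t : ℝ, ‖∑ p ∈ c.support, c p * gabor (rbG r) 1 1 p.1 p.2 t‖^2) ∧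
    (∫ t : ℝ, ‖∑ p ∈ c.support, c p * gabor (rbG r) 1 1 p.1 p.2 t‖^2)
      ≤ 4 * (∑ p ∈ c.support, ‖c p‖^2) := by
  classical
  rw [Qval]
  set S := ∑ p ∈ c.support, ‖c p‖^2 with hSdef
  set T1 := ∑ p ∈ c.support, (c p * (starRingEnd ℂ) (c (p.1, p.2 - 1))).re with hT1
  set T2 := ∑ p ∈ c.support, (c p * (starRingEnd ℂ) (c (p.1, p.2 + 1))).re with hT2
  have hsum : ∑ p ∈ c.support, ((1 + r^2) * ‖c p‖^2
      + r * (c p * (starRingEnd ℂ) (c (p.1, p.2 - 1))).re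
      + r * (c p * (starRingEnd ℂ) (c (p.1, p.2 + 1))).re)
      = (1 + r^2) * S + r * T1 + r * T2 := by
    rw [Finset.sum_add_distrib, Finset.sum_add_distrib, ← Finset.mul_sum, ← Finset.mul_sum,
      ← Finset.mul_sum]
  rw [hsum]
  have hσ1 : Function.Injective (fun p : ℤ × ℤ => (p.1, p.2 - 1)) := by
    intro a b h
    simp only [Prod.ext_iff] at h ⊢
    omega
  have hσ2 : Function.Injective (fun p : ℤ × ℤ => (p.1, p.2 + 1)) := by
    intro a b h
    simp only [Prod.ext_iff] at h ⊢
    omega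
  have hb1 := cross_bound c _ hσ1
  have hb2 := cross_bound c _ hσ2
  rw [← hT1] at hb1
  rw [← hT2] at hb2
  rw [abs_le] at hb1 hb2
  rw [← hSdef] at hb1 hb2
  have hS0 : 0 ≤ S := Finset.sum_nonneg (fun p _ => by positivity)
  have e1 := mul_le_mul_of_nonneg_left hb1.1 hr0
  have e2 := mul_le_mul_of_nonneg_left hb2.1 hr0
  have e3 := mul_le_mul_of_nonneg_left hb1.2 hr0
  have e4 := mul_le_mul_of_nonneg_left hb2.2 hr0
  have hr2 : r^2 ≤ 1 := by nlinarith
  have h5 : r^2 * S ≤ S := by nlinarith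
  have h6 : r * S ≤ S := by nlinarith
  constructor
  · nlinarith
  · nlinarith

/-- For `g = χ_{[0,1]} + (1-ε)χ_{[1,2]}` with `0 < ε < 1`, every finitely supported sequence
of scalars `(a_{mn})` satisfies `‖∑ a_{mn} E_m T_n g‖ ≥ ε (∑ |a_{mn}|²)^{1/2}`; in particular
`(E_m T_n g)` is a Riesz basic sequence with lower Riesz bound `ε²`. -/
theorem riesz_basic_lower_bound (ε : ℝ) (hε0 : 0 < ε) (hε1 : ε < 1) (g : ℝ → ℂ)
    (hgdef : g = fun t : ℝ =>
      Set.indicator (Set.Icc (0 : ℝ) 1) (fun _ => (1 : ℂ)) t +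
        ((1 - ε : ℝ) : ℂ) * Set.indicator (Set.Icc (1 : ℝ) 2) (fun _ => (1 : ℂ)) t) :
    (∀ c : (ℤ × ℤ) →₀ ℂ,
      ε * Real.sqrt (∑ p ∈ c.support, ‖c p‖ ^ 2)
        ≤ Real.sqrt (∫ t : ℝ, ‖∑ p ∈ c.support, c p * gabor g 1 1 p.1 p.2 t‖ ^ 2)) ∧
    (∃ C : ℝ, 0 < C ∧ ∀ c : (ℤ × ℤ) →₀ ℂ,
      ε ^ 2 * (∑ p ∈ c.support, ‖c p‖ ^ 2)
          ≤ (∫ t : ℝ, ‖∑ p ∈ c.support, c p * gabor g 1 1 p.1 p.2 t‖ ^ 2) ∧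
        (∫ t : ℝ, ‖∑ p ∈ c.support, c p * gabor g 1 1 p.1 p.2 t‖ ^ 2)
          ≤ C * (∑ p ∈ c.support, ‖c p‖ ^ 2)) := by
  have hg : g = rbG (1 - ε) := by rw [hgdef]; rfl
  have hr0 : (0:ℝ) ≤ 1 - ε := by linarith
  have hr1 : (1:ℝ) - ε ≤ 1 := by linarith
  have hεsq : (1 - (1 - ε))^2 = ε^2 := by ring
  have key : ∀ c : (ℤ × ℤ) →₀ ℂ,
      ε ^ 2 * (∑ p ∈ c.support, ‖c p‖ ^ 2)
          ≤ (∫ t : ℝ, ‖∑ p ∈ c.support, c p * gabor g 1 1 p.1 p.2 t‖ ^ 2) ∧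
        (∫ t : ℝ, ‖∑ p ∈ c.support, c p * gabor g 1 1 p.1 p.2 t‖ ^ 2)
          ≤ 4 * (∑ p ∈ c.support, ‖c p‖ ^ 2) := by
    intro c
    have h := Qbounds (1 - ε) hr0 hr1 c
    rw [hεsq] at h
    rw [hg]
    exact h
  refine ⟨?_, 4, by norm_num, fun c => key c⟩
  intro c
  have h := (key c).1
  have hS0 : 0 ≤ ∑ p ∈ c.support, ‖c p‖ ^ 2 := Finset.sum_nonneg (fun p _ => by positivity)
  calc ε * Real.sqrt (∑ p ∈ c.support, ‖c p‖ ^ 2)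
      = Real.sqrt (ε^2 * ∑ p ∈ c.support, ‖c p‖ ^ 2) := by
        rw [Real.sqrt_mul (sq_nonneg ε), Real.sqrt_sq hε0.le]
    _ ≤ Real.sqrt (∫ t : ℝ, ‖∑ p ∈ c.support, c p * gabor g 1 1 p.1 p.2 t‖ ^ 2) :=
        Real.sqrt_le_sqrt h
end
end

section
/- Let h = χ_{[0,2]} ∈ L²(ℝ). Then (h, 1, 1) is not a Weyl–Heisenberg frame for L²(ℝ); that is, there is no pair of constants A, B > 0 such that A‖f‖² ≤ Σ_{m,n∈ℤ} |⟨f, E_m T_n h⟩|² ≤ B‖f‖² for all f ∈ L²(ℝ). -/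
open MeasureTheory Set
open scoped ENNReal NNReal

noncomputable section

/-! ### Auxiliary material for the counterexample -/

/-- The test function `f_N = ∑_{j<N} (-1)^j χ_{[j,j+1)}`. -/
def ffun (N : ℕ) : ℝ → ℂ :=
  fun t => ∑ j ∈ Finset.range N, ((-1:ℂ))^j * Set.indicator (Set.Ico (j:ℝ) (j+1)) (fun _ => (1:ℂ)) t

lemma ffun_eq (N : ℕ) : ffun N = ∑ j ∈ Finset.range N,
    Set.indicator (Set.Ico (j:ℝ) (j+1)) (fun _ => ((-1:ℂ))^j) := by
  funext t
  simp only [ffun, Finset.sum_apply]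
  refine Finset.sum_congr rfl fun j _ => ?_
  by_cases ht : t ∈ Set.Ico (j:ℝ) (j+1) <;> simp [ht]

lemma ffun_memLp (N : ℕ) : MemLp (ffun N) 2 volume := by
  rw [ffun_eq]
  refine memLp_finset_sum' _ fun j _ => ?_
  refine memLp_indicator_const 2 measurableSet_Ico _ (Or.inr ?_)
  simp [Real.volume_Ico]

lemma mem_Ico_unique {j k : ℕ} {t : ℝ} (hj : t ∈ Set.Ico (j:ℝ) (j+1))
    (hk : t ∈ Set.Ico (k:ℝ) (k+1)) : j = k := by
  have h0 : (0:ℝ) ≤ t := le_trans (by positivity) hj.1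
  have h1 : ⌊t⌋₊ = j := (Nat.floor_eq_iff h0).2 ⟨hj.1, hj.2⟩
  have h2 : ⌊t⌋₊ = k := (Nat.floor_eq_iff h0).2 ⟨hk.1, hk.2⟩
  omega

lemma ffun_norm_integral (N : ℕ) : ∫ t : ℝ, ‖ffun N t‖ ^ 2 = (N : ℝ) := by
  have hpt : ∀ t : ℝ, ‖ffun N t‖ ^ 2
      = ∑ j ∈ Finset.range N, Set.indicator (Set.Ico (j:ℝ) (j+1)) (fun _ => (1:ℝ)) t := by
    intro t
    by_cases hex : ∃ j ∈ Finset.range N, t ∈ Set.Ico (j:ℝ) (j+1)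
    · obtain ⟨j0, hj0, hmem⟩ := hex
      have h1 : ffun N t = ((-1:ℂ))^j0 := by
        rw [ffun]
        rw [Finset.sum_eq_single_of_mem j0 hj0]
        · simp [Set.indicator_of_mem hmem]
        · intro j hj hne
          have : t ∉ Set.Ico (j:ℝ) (j+1) := fun hc => hne (mem_Ico_unique hc hmem)
          simp [Set.indicator_of_notMem this]
      have h2 : ∑ j ∈ Finset.range N, Set.indicator (Set.Ico (j:ℝ) (j+1)) (fun _ => (1:ℝ)) t = 1 := by
        rw [Finset.sum_eq_single_of_mem j0 hj0]
        · simp [Set.indicator_of_mem hmem]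
        · intro j hj hne
          have : t ∉ Set.Ico (j:ℝ) (j+1) := fun hc => hne (mem_Ico_unique hc hmem)
          simp [Set.indicator_of_notMem this]
      rw [h1, h2]; simp
    · push_neg at hex
      have h1 : ffun N t = 0 := by
        rw [ffun]
        refine Finset.sum_eq_zero fun j hj => ?_
        simp [Set.indicator_of_notMem (hex j hj)]
      have h2 : ∑ j ∈ Finset.range N, Set.indicator (Set.Ico (j:ℝ) (j+1)) (fun _ => (1:ℝ)) t = 0 :=
        Finset.sum_eq_zero fun j hj => by simp [Set.indicator_of_notMem (hex j hj)]
      rw [h1, h2]; simp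
  calc ∫ t : ℝ, ‖ffun N t‖ ^ 2
      = ∫ t : ℝ, ∑ j ∈ Finset.range N, Set.indicator (Set.Ico (j:ℝ) (j+1)) (fun _ => (1:ℝ)) t := by
        simp only [hpt]
    _ = ∑ j ∈ Finset.range N, ∫ t : ℝ, Set.indicator (Set.Ico (j:ℝ) (j+1)) (fun _ => (1:ℝ)) t := by
        refine integral_finset_sum _ fun j _ => ?_
        refine (IntegrableOn.integrable_indicator ?_ measurableSet_Ico)
        rw [integrableOn_const_iff]
        exact Or.inr (by simp [Real.volume_Ico])
    _ = (N : ℝ) := by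
        have : ∀ j : ℕ, ∫ t : ℝ, Set.indicator (Set.Ico (j:ℝ) (j+1)) (fun _ => (1:ℝ)) t = 1 := by
          intro j
          rw [integral_indicator_const _ measurableSet_Ico]
          simp [Real.volume_Ico]
        simp [this]

lemma conj_gabor (h : ℝ → ℂ) (hdef : h = Set.indicator (Set.Icc (0 : ℝ) 2) (fun _ => (1 : ℂ)))
    (m n : ℤ) (t : ℝ) :
    (starRingEnd ℂ) (gabor h 1 1 m n t)
      = Complex.exp ((-(2 * Real.pi * Complex.I * m)) * t)
        * Set.indicator (Set.Icc (n:ℝ) (n+2)) (fun _ => (1:ℂ)) t := by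
  have h1 : h (t - (n:ℝ) * 1) = Set.indicator (Set.Icc (n:ℝ) (n+2)) (fun _ => (1:ℂ)) t := by
    rw [hdef]
    by_cases ht : t ∈ Set.Icc (n:ℝ) (n+2)
    · rw [Set.indicator_of_mem ht, Set.indicator_of_mem]
      simp only [Set.mem_Icc] at ht ⊢
      constructor <;> linarith [ht.1, ht.2]
    · rw [Set.indicator_of_notMem ht, Set.indicator_of_notMem]
      intro hc
      apply ht
      simp only [Set.mem_Icc] at hc ⊢
      constructor <;> linarith [hc.1, hc.2]
  have h2 : ∀ x : ℂ, (starRingEnd ℂ) (Set.indicator (Set.Icc (n:ℝ) (n+2)) (fun _ => (1:ℂ)) t)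
      = Set.indicator (Set.Icc (n:ℝ) (n+2)) (fun _ => (1:ℂ)) t := by
    intro x
    by_cases ht : t ∈ Set.Icc (n:ℝ) (n+2) <;> simp [ht]
  unfold gabor
  rw [map_mul, h1, h2 0]
  congr 1
  rw [← Complex.exp_conj]
  congr 1
  simp only [map_mul, Complex.conj_I, Complex.conj_ofReal, map_intCast, map_ofNat, map_one]
  push_cast
  ring

lemma key_integral (m n : ℤ) (j : ℕ) :
    (∫ t in Set.Ico (j:ℝ) (j+1) ∩ Set.Icc (n:ℝ) (n+2),
        Complex.exp ((-(2 * Real.pi * Complex.I * m)) * t))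
      = if (n ≤ (j:ℤ) ∧ (j:ℤ) ≤ n + 1) then (if m = 0 then 1 else 0) else 0 := by
  by_cases hc : n ≤ (j:ℤ) ∧ (j:ℤ) ≤ n + 1
  · have hsub : Set.Ico (j:ℝ) (j+1) ⊆ Set.Icc (n:ℝ) (n+2) := by
      intro t ht
      have e1 : (n:ℝ) ≤ (j:ℝ) := by exact_mod_cast hc.1
      have e2 : (j:ℝ) ≤ (n:ℝ) + 1 := by exact_mod_cast hc.2
      exact ⟨le_trans e1 ht.1, le_trans (le_of_lt ht.2) (by linarith)⟩
    rw [Set.inter_eq_left.mpr hsub, if_pos hc]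
    by_cases hm : m = 0
    · rw [if_pos hm, hm]
      simp only [Int.cast_zero, mul_zero, neg_zero, zero_mul, Complex.exp_zero]
      rw [setIntegral_const]
      simp [Real.volume_Ico]
    · rw [if_neg hm]
      have hcne : (-(2 * (Real.pi:ℂ) * Complex.I * m)) ≠ 0 := by
        simp [Real.pi_ne_zero, Complex.I_ne_zero, Complex.ofReal_ne_zero, hm]
      rw [MeasureTheory.integral_Ico_eq_integral_Ioo,
        ← MeasureTheory.integral_Ioc_eq_integral_Ioo,
        ← intervalIntegral.integral_of_le (by linarith : (j:ℝ) ≤ (j:ℝ)+1)]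
      rw [integral_exp_mul_complex hcne]
      have : Complex.exp ((-(2 * (Real.pi:ℂ) * Complex.I * m)) * ((j:ℝ)+1 : ℝ))
          = Complex.exp ((-(2 * (Real.pi:ℂ) * Complex.I * m)) * ((j:ℝ) : ℝ)) := by
        rw [show ((-(2 * (Real.pi:ℂ) * Complex.I * m)) * (((j:ℝ)+1 : ℝ) : ℂ))
            = (-(2 * (Real.pi:ℂ) * Complex.I * m)) * (((j:ℝ) : ℝ) : ℂ)
              + (-m : ℤ) * (2 * Real.pi * Complex.I) by push_cast; ring]
        rw [Complex.exp_add, Complex.exp_int_mul_two_pi_mul_I, mul_one]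
      rw [this, sub_self, zero_div]
  · rw [if_neg hc]
    have hnull : volume (Set.Ico (j:ℝ) (j+1) ∩ Set.Icc (n:ℝ) (n+2)) = 0 := by
      rcases not_and_or.mp hc with hl | hr
      · push_neg at hl
        have : Set.Ico (j:ℝ) (j+1) ∩ Set.Icc (n:ℝ) (n+2) = ∅ := by
          ext t
          simp only [Set.mem_inter_iff, Set.mem_Ico, Set.mem_Icc, Set.mem_empty_iff_false,
            iff_false, not_and, and_imp]
          intro h1 h2 h3
          have : (j:ℝ) + 1 ≤ (n:ℝ) := by exact_mod_cast (by omega : (j:ℤ) + 1 ≤ n)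
          linarith
        rw [this]; simp
      · push_neg at hr
        have hsub : Set.Ico (j:ℝ) (j+1) ∩ Set.Icc (n:ℝ) (n+2) ⊆ {(n:ℝ)+2} := by
          intro t ht
          have : (n:ℝ) + 2 ≤ (j:ℝ) := by exact_mod_cast (by omega : n + 2 ≤ (j:ℤ))
          have := ht.1.1
          have := ht.2.2
          simp only [Set.mem_singleton_iff]
          linarith
        exact measure_mono_null hsub (by simp)
    rw [Measure.restrict_eq_zero.mpr hnull]
    simp

lemma whCoef_ffun (h : ℝ → ℂ) (hdef : h = Set.indicator (Set.Icc (0 : ℝ) 2) (fun _ => (1 : ℂ)))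
    (N : ℕ) (m n : ℤ) :
    whCoef h 1 1 (ffun N) (m, n)
      = ∑ j ∈ Finset.range N,
          ((-1:ℂ))^j * (if (n ≤ (j:ℤ) ∧ (j:ℤ) ≤ n + 1) then (if m = 0 then 1 else 0) else 0) := by
  have hcont : Continuous (fun t : ℝ => Complex.exp ((-(2 * Real.pi * Complex.I * m)) * t)) :=
    Complex.continuous_exp.comp (continuous_const.mul Complex.continuous_ofReal)
  have hterm : ∀ (j : ℕ) (t : ℝ),
      ((-1:ℂ))^j * Set.indicator (Set.Ico (j:ℝ) (j+1)) (fun _ => (1:ℂ)) t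
        * (Complex.exp ((-(2 * Real.pi * Complex.I * m)) * t)
            * Set.indicator (Set.Icc (n:ℝ) (n+2)) (fun _ => (1:ℂ)) t)
      = Set.indicator (Set.Ico (j:ℝ) (j+1) ∩ Set.Icc (n:ℝ) (n+2))
          (fun t => ((-1:ℂ))^j * Complex.exp ((-(2 * Real.pi * Complex.I * m)) * t)) t := by
    intro j t
    by_cases h1 : t ∈ Set.Ico (j:ℝ) (j+1) <;> by_cases h2 : t ∈ Set.Icc (n:ℝ) (n+2) <;>
      simp [Set.indicator, h1, h2]
  have hint : ∀ j : ℕ, Integrable (Set.indicator (Set.Ico (j:ℝ) (j+1) ∩ Set.Icc (n:ℝ) (n+2))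
      (fun t => ((-1:ℂ))^j * Complex.exp ((-(2 * Real.pi * Complex.I * m)) * t))) volume := by
    intro j
    refine IntegrableOn.integrable_indicator ?_ (measurableSet_Ico.inter measurableSet_Icc)
    refine IntegrableOn.mono_set ?_ (Set.inter_subset_left.trans Set.Ico_subset_Icc_self)
    exact (continuous_const.mul hcont).integrableOn_Icc
  calc whCoef h 1 1 (ffun N) (m, n)
      = ∫ t : ℝ, ∑ j ∈ Finset.range N, Set.indicator (Set.Ico (j:ℝ) (j+1) ∩ Set.Icc (n:ℝ) (n+2))
          (fun t => ((-1:ℂ))^j * Complex.exp ((-(2 * Real.pi * Complex.I * m)) * t)) t := by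
        unfold whCoef
        refine integral_congr_ae (Filter.Eventually.of_forall fun t => ?_)
        simp only
        rw [conj_gabor h hdef m n t]
        unfold ffun
        rw [Finset.sum_mul]
        exact Finset.sum_congr rfl fun j _ => hterm j t
    _ = ∑ j ∈ Finset.range N, ∫ t : ℝ, Set.indicator (Set.Ico (j:ℝ) (j+1) ∩ Set.Icc (n:ℝ) (n+2))
          (fun t => ((-1:ℂ))^j * Complex.exp ((-(2 * Real.pi * Complex.I * m)) * t)) t :=
        integral_finset_sum _ fun j _ => hint j
    _ = ∑ j ∈ Finset.range N,
          ((-1:ℂ))^j * (if (n ≤ (j:ℤ) ∧ (j:ℤ) ≤ n + 1) then (if m = 0 then 1 else 0) else 0) := by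
        refine Finset.sum_congr rfl fun j _ => ?_
        rw [integral_indicator (measurableSet_Ico.inter measurableSet_Icc),
          MeasureTheory.integral_const_mul, key_integral]

/-- Closed form for the inner alternating sums. -/
def Tsum (N : ℕ) (k : ℤ) : ℂ := if 0 ≤ k ∧ k < N then ((-1:ℂ))^(k.toNat) else 0

lemma T_eval (N : ℕ) (k : ℤ) :
    ∑ j ∈ Finset.range N, ((-1:ℂ))^j * (if (j:ℤ) = k then 1 else 0) = Tsum N k := by
  by_cases hk : 0 ≤ k ∧ k < N
  · have hmem : k.toNat ∈ Finset.range N := by simp; omega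
    rw [Finset.sum_eq_single_of_mem k.toNat hmem]
    · rw [if_pos (by omega : ((k.toNat:ℤ)) = k)]
      simp [Tsum, hk]
    · intro j hj hne
      rw [if_neg (by omega : ¬ ((j:ℤ) = k)), mul_zero]
  · rw [Tsum, if_neg hk]
    refine Finset.sum_eq_zero fun j hj => ?_
    simp only [Finset.mem_range] at hj
    rw [if_neg (by omega : ¬ ((j:ℤ) = k)), mul_zero]

lemma sum_eq_T (N : ℕ) (m n : ℤ) :
    (∑ j ∈ Finset.range N,
        ((-1:ℂ))^j * (if (n ≤ (j:ℤ) ∧ (j:ℤ) ≤ n + 1) then (if m = 0 then 1 else 0) else 0))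
      = (if m = 0 then (1:ℂ) else 0) * (Tsum N n + Tsum N (n+1)) := by
  have hsplit : ∀ j : ℕ, (if (n ≤ (j:ℤ) ∧ (j:ℤ) ≤ n + 1) then (if m = 0 then (1:ℂ) else 0) else 0)
      = (if m = 0 then (1:ℂ) else 0) *
          ((if (j:ℤ) = n then (1:ℂ) else 0) + (if (j:ℤ) = n + 1 then (1:ℂ) else 0)) := by
    intro j
    by_cases h1 : (j:ℤ) = n
    · have c1 : n ≤ (j:ℤ) ∧ (j:ℤ) ≤ n + 1 := by omega
      have c2 : ¬((j:ℤ) = n + 1) := by omega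
      rw [if_pos c1, if_pos h1, if_neg c2, add_zero, mul_one]
    · by_cases h2 : (j:ℤ) = n + 1
      · have c1 : n ≤ (j:ℤ) ∧ (j:ℤ) ≤ n + 1 := by omega
        rw [if_pos c1, if_neg h1, if_pos h2, zero_add, mul_one]
      · have c1 : ¬(n ≤ (j:ℤ) ∧ (j:ℤ) ≤ n + 1) := by omega
        rw [if_neg c1, if_neg h1, if_neg h2, add_zero, mul_zero]
  calc ∑ j ∈ Finset.range N,
        ((-1:ℂ))^j * (if (n ≤ (j:ℤ) ∧ (j:ℤ) ≤ n + 1) then (if m = 0 then 1 else 0) else 0)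
      = ∑ j ∈ Finset.range N, ((if m = 0 then (1:ℂ) else 0) *
          (((-1:ℂ))^j * (if (j:ℤ) = n then (1:ℂ) else 0)
            + ((-1:ℂ))^j * (if (j:ℤ) = n + 1 then (1:ℂ) else 0))) := by
        refine Finset.sum_congr rfl fun j _ => ?_
        rw [hsplit j]; ring
    _ = (if m = 0 then (1:ℂ) else 0) * (Tsum N n + Tsum N (n+1)) := by
        rw [← Finset.mul_sum, Finset.sum_add_distrib, T_eval, T_eval]

lemma T_norm (N : ℕ) (k : ℤ) : ‖Tsum N k‖ ≤ 1 := by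
  rw [Tsum]; split_ifs <;> simp

lemma T_add_eq_zero (N : ℕ) (n : ℤ) (hn1 : n ≠ -1) (hn2 : n ≠ (N:ℤ) - 1) :
    Tsum N n + Tsum N (n+1) = 0 := by
  rcases lt_or_ge n 0 with hneg | hpos
  · rw [Tsum, if_neg (by omega), Tsum, if_neg (by omega), add_zero]
  · rcases lt_or_ge (n+1) (N:ℤ) with hlt | hge
    · rw [Tsum, if_pos (by omega), Tsum, if_pos (by omega)]
      have ht : (n+1).toNat = n.toNat + 1 := by omega
      rw [ht, pow_succ]
      ring
    · rw [Tsum, if_neg (by omega), Tsum, if_neg (by omega), add_zero]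

/-- `(χ_{[0,2]}, 1, 1)` is not a Weyl–Heisenberg frame for `L²(ℝ)`. -/
theorem chi02_not_whframe (h : ℝ → ℂ)
    (hdef : h = Set.indicator (Set.Icc (0 : ℝ) 2) (fun _ => (1 : ℂ))) :
    ¬ IsWHFrame h 1 1 := by
  rintro ⟨A, B, hg, hA, hB, hframe⟩
  set N : ℕ := ⌈(9:ℝ)/A⌉₊ with hN
  obtain ⟨hsum, hlow, -⟩ := hframe (ffun N) (ffun_memLp N)
  rw [ffun_norm_integral] at hlow
  have hcoef : ∀ p : ℤ × ℤ, whCoef h 1 1 (ffun N) p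
      = (if p.1 = 0 then (1:ℂ) else 0) * (Tsum N p.2 + Tsum N (p.2+1)) := by
    intro p
    obtain ⟨m, n⟩ := p
    rw [whCoef_ffun h hdef N m n, sum_eq_T]
  have hvanish : ∀ p : ℤ × ℤ,
      p ∉ ({((0:ℤ), (-1:ℤ)), ((0:ℤ), (N:ℤ)-1)} : Finset (ℤ × ℤ)) →
      ‖whCoef h 1 1 (ffun N) p‖ ^ 2 = 0 := by
    intro p hp
    have hne1 : ¬(p.1 = 0 ∧ p.2 = -1) := by
      intro hc
      exact hp (by simp [Finset.mem_insert, Prod.ext_iff, hc.1, hc.2])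
    have hne2 : ¬(p.1 = 0 ∧ p.2 = (N:ℤ)-1) := by
      intro hc
      exact hp (by simp [Finset.mem_insert, Finset.mem_singleton, Prod.ext_iff, hc.1, hc.2])
    rw [hcoef]
    by_cases hm : p.1 = 0
    · rw [if_pos hm, one_mul,
        T_add_eq_zero N p.2 (fun hc => hne1 ⟨hm, hc⟩) (fun hc => hne2 ⟨hm, hc⟩)]
      simp
    · rw [if_neg hm, zero_mul]
      simp
  have hbound : ∀ p : ℤ × ℤ, ‖whCoef h 1 1 (ffun N) p‖ ^ 2 ≤ 4 := by
    intro p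
    rw [hcoef]
    have h1 : ‖(if p.1 = 0 then (1:ℂ) else 0)‖ ≤ 1 := by split_ifs <;> simp
    have h2 : ‖Tsum N p.2 + Tsum N (p.2+1)‖ ≤ 2 :=
      le_trans (norm_add_le _ _) (by linarith [T_norm N p.2, T_norm N (p.2+1)])
    have h3 : ‖(if p.1 = 0 then (1:ℂ) else 0) * (Tsum N p.2 + Tsum N (p.2+1))‖ ≤ 2 := by
      rw [norm_mul]
      calc ‖(if p.1 = 0 then (1:ℂ) else 0)‖ * ‖Tsum N p.2 + Tsum N (p.2+1)‖
          ≤ 1 * 2 := mul_le_mul h1 h2 (norm_nonneg _) zero_le_one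
        _ = 2 := by norm_num
    calc ‖(if p.1 = 0 then (1:ℂ) else 0) * (Tsum N p.2 + Tsum N (p.2+1))‖ ^ 2
        ≤ 2 ^ 2 := pow_le_pow_left₀ (norm_nonneg _) h3 2
      _ = 4 := by norm_num
  have htsum : (∑' p : ℤ × ℤ, ‖whCoef h 1 1 (ffun N) p‖ ^ 2) ≤ 8 := by
    rw [tsum_eq_sum hvanish]
    refine le_trans (Finset.sum_le_sum fun p _ => hbound p) ?_
    rw [Finset.sum_const, nsmul_eq_mul]
    have hcard : (({((0:ℤ), (-1:ℤ)), ((0:ℤ), (N:ℤ)-1)} : Finset (ℤ × ℤ)).card) ≤ 2 :=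
      le_trans (Finset.card_insert_le _ _) (by simp)
    have : ((({((0:ℤ), (-1:ℤ)), ((0:ℤ), (N:ℤ)-1)} : Finset (ℤ × ℤ)).card : ℝ)) ≤ 2 := by
      exact_mod_cast hcard
    nlinarith
  have hNge : (9:ℝ)/A ≤ (N:ℝ) := Nat.le_ceil _
  have h9 : (9:ℝ) ≤ A * N := by
    rw [div_le_iff₀ hA] at hNge
    linarith
  linarith

end
end

section
/- If (g, a, b) is a Weyl–Heisenberg frame for L²(ℝ) with frame bounds A, B, then bA ≤ Σ_{n∈ℤ} |g(t−na)|² ≤ bB for a.e. t ∈ ℝ. -/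
open MeasureTheory Set
open scoped ENNReal NNReal

noncomputable section

/-! ### Auxiliary lemmas -/

open Complex Metric Filter
open scoped Topology

/-- Parseval's identity for an `L²` function on `ℝ` supported in an interval of length `T`. -/
lemma parseval_interval (T : ℝ) (hT : 0 < T) (c : ℝ) (h : ℝ → ℂ)
    (hsm : StronglyMeasurable h) (hmem : MemLp h 2 volume)
    (hsupp : ∀ t, t ∉ Ioc c (c + T) → h t = 0) :
    ∑' m : ℤ, ‖∫ t : ℝ, h t *
        (starRingEnd ℂ) (Complex.exp (2 * (Real.pi : ℂ) * Complex.I * (m : ℂ) * (t : ℂ) / (T : ℂ)))‖ ^ 2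
      = T * ∫ t : ℝ, ‖h t‖ ^ 2 := by
  haveI : Fact (0 < T) := ⟨hT⟩
  set H : AddCircle T → ℂ := AddCircle.liftIoc T c h with hHdef
  set C : ℤ → ℂ := fun m => ∫ t : ℝ, h t *
      (starRingEnd ℂ) (Complex.exp (2 * (Real.pi : ℂ) * Complex.I * (m : ℂ) * (t : ℂ) / (T : ℂ)))
    with hCdef
  have hconj : ∀ (m : ℤ) (t : ℝ),
      (starRingEnd ℂ) (Complex.exp (2 * (Real.pi : ℂ) * Complex.I * (m : ℂ) * (t : ℂ) / (T : ℂ)))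
        = fourier (-m) (t : AddCircle T) := by
    intro m t
    rw [fourier_coe_apply, ← Complex.exp_conj]
    congr 1
    simp only [map_div₀, map_mul, Complex.conj_I, map_ofNat, Complex.conj_ofReal, map_intCast,
      Int.cast_neg]
    ring
  have hHsm : StronglyMeasurable H :=
    hsm.comp_measurable (measurable_subtype_coe.comp (AddCircle.measurableEquivIoc T c).measurable)
  have hae : (fun x : ℝ => H ((x : AddCircle T))) =ᵐ[volume.restrict (Ioc c (c + T))] h := by
    filter_upwards [ae_restrict_mem measurableSet_Ioc] with x hx
    exact AddCircle.liftIoc_coe_apply hx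
  have h1 : eLpNorm H 2 (volume : Measure (AddCircle T))
      = eLpNorm h 2 (volume.restrict (Ioc c (c + T))) := by
    rw [← eLpNorm_comp_measurePreserving (p := 2) hHsm.aestronglyMeasurable
      (AddCircle.measurePreserving_mk T c)]
    exact eLpNorm_congr_ae hae
  have hHvol : MemLp H 2 (volume : Measure (AddCircle T)) := by
    refine ⟨hHsm.aestronglyMeasurable, ?_⟩
    rw [h1]
    exact (eLpNorm_mono_measure _ Measure.restrict_le_self).trans_lt hmem.2
  have hhaar_eq : (AddCircle.haarAddCircle : Measure (AddCircle T))
      = (ENNReal.ofReal T)⁻¹ • (volume : Measure (AddCircle T)) := by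
    rw [AddCircle.volume_eq_smul_haarAddCircle, smul_smul,
      ENNReal.inv_mul_cancel (ENNReal.ofReal_pos.2 hT).ne' ENNReal.ofReal_ne_top, one_smul]
  have hHhaar : MemLp H 2 (AddCircle.haarAddCircle : Measure (AddCircle T)) := by
    rw [hhaar_eq]
    exact hHvol.smul_measure (ENNReal.inv_ne_top.mpr (ENNReal.ofReal_pos.2 hT).ne')
  set F := hHhaar.toLp H with hFdef
  have hmain := tsum_sq_fourierCoeff F
  -- the coefficients
  have hL : ∀ m : ℤ, fourierCoeff (F : AddCircle T → ℂ) m = (1 / T : ℝ) • C m := by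
    intro m
    have hcoefF : fourierCoeff (F : AddCircle T → ℂ) m = fourierCoeff H m := by
      simp only [fourierCoeff]
      refine integral_congr_ae ?_
      filter_upwards [hHhaar.coeFn_toLp] with x hx
      rw [hx]
    rw [hcoefF, fourierCoeff_eq_intervalIntegral H m c]
    congr 1
    rw [intervalIntegral.integral_of_le (by linarith : c ≤ c + T)]
    have hcong : (fun x : ℝ => fourier (-m) ((x : AddCircle T)) • H ((x : AddCircle T)))
        =ᵐ[volume.restrict (Ioc c (c + T))]
        fun x : ℝ => h x *
          (starRingEnd ℂ) (Complex.exp (2 * (Real.pi : ℂ) * Complex.I * (m : ℂ) * (x : ℂ) / (T : ℂ))) := by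
      filter_upwards [hae] with x hx
      rw [show H ((x : AddCircle T)) = h x from hx, ← hconj, smul_eq_mul, mul_comm]
    refine (integral_congr_ae hcong).trans ?_
    exact setIntegral_eq_integral_of_forall_compl_eq_zero fun x hx => by rw [hsupp x hx, zero_mul]
  -- the right-hand side
  have hR : ∫ t : AddCircle T, ‖F t‖ ^ 2 ∂AddCircle.haarAddCircle
      = T⁻¹ * ∫ t : ℝ, ‖h t‖ ^ 2 := by
    rw [show (∫ t : AddCircle T, ‖F t‖ ^ 2 ∂AddCircle.haarAddCircle)
        = ∫ t : AddCircle T, ‖H t‖ ^ 2 ∂AddCircle.haarAddCircle from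
      integral_congr_ae (by filter_upwards [hHhaar.coeFn_toLp] with x hx; rw [hx])]
    rw [hhaar_eq, integral_smul_measure]
    rw [show (∫ t : AddCircle T, ‖H t‖ ^ 2 ∂(volume : Measure (AddCircle T)))
        = ∫ t : ℝ, ‖h t‖ ^ 2 from by
      rw [← AddCircle.integral_preimage T c (fun z => ‖H z‖ ^ 2)]
      rw [show (∫ x in Ioc c (c + T), ‖H ((x : AddCircle T))‖ ^ 2)
          = ∫ x in Ioc c (c + T), ‖h x‖ ^ 2 from
        integral_congr_ae (hae.mono fun x hx => congrArg (fun z : ℂ => ‖z‖ ^ 2) hx)]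
      exact setIntegral_eq_integral_of_forall_compl_eq_zero fun x hx => by rw [hsupp x hx]; simp]
    simp [ENNReal.toReal_inv, ENNReal.toReal_ofReal hT.le, smul_eq_mul]
  simp only [hL] at hmain
  rw [hR] at hmain
  have hnorm : ∀ m : ℤ, ‖(1 / T : ℝ) • C m‖ ^ 2 = (1 / T) ^ 2 * ‖C m‖ ^ 2 := by
    intro m
    rw [norm_smul, Real.norm_eq_abs, abs_of_pos (by positivity), mul_pow]
  simp only [hnorm] at hmain
  rw [tsum_mul_left] at hmain
  have hT' : T ≠ 0 := hT.ne'
  calc ∑' m : ℤ, ‖C m‖ ^ 2 = T ^ 2 * ((1 / T) ^ 2 * ∑' m : ℤ, ‖C m‖ ^ 2) := by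
        field_simp
    _ = T ^ 2 * (T⁻¹ * ∫ t : ℝ, ‖h t‖ ^ 2) := by rw [hmain]
    _ = T * ∫ t : ℝ, ‖h t‖ ^ 2 := by
        field_simp

/-- The sum over modulations of squared frame coefficients of an indicator of a small ball. -/
lemma coef_sum_eq (g : ℝ → ℂ) (a b : ℝ) (hb : 0 < b) (hsm : StronglyMeasurable g)
    (hgmem : MemLp g 2 volume) (x r : ℝ) (hr : 0 < r) (hr2 : 2 * r < b⁻¹) (n : ℤ) :
    ∑' m : ℤ, ‖whCoef g a b ((closedBall x r).indicator fun _ => (1 : ℂ)) (m, n)‖ ^ 2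
      = b⁻¹ * ∫ t in closedBall x r, ‖g (t - (n : ℝ) * a)‖ ^ 2 := by
  set T : ℝ := b⁻¹ with hTdef
  have hT : 0 < T := by positivity
  set E : Set ℝ := closedBall x r with hEdef
  set h : ℝ → ℂ := E.indicator fun t => (starRingEnd ℂ) (g (t - (n : ℝ) * a)) with hhdef
  have hEsub : E ⊆ Ioc (x - T / 2) (x - T / 2 + T) := by
    intro t ht
    rw [hEdef, Real.closedBall_eq_Icc] at ht
    constructor
    · linarith [ht.1]
    · linarith [ht.2]
  have hsm_tr : StronglyMeasurable fun t : ℝ => (starRingEnd ℂ) (g (t - (n : ℝ) * a)) := by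
    have : Measurable fun t : ℝ => g (t - (n : ℝ) * a) :=
      hsm.measurable.comp (measurable_id.sub_const _)
    exact (Complex.continuous_conj.measurable.comp this).stronglyMeasurable
  have hsm_h : StronglyMeasurable h := hsm_tr.indicator measurableSet_closedBall
  have hmem_tr : MemLp (fun t : ℝ => g (t - (n : ℝ) * a)) 2 volume :=
    hgmem.comp_measurePreserving (measurePreserving_sub_right volume _)
  have hmem_conj : MemLp (fun t : ℝ => (starRingEnd ℂ) (g (t - (n : ℝ) * a))) 2 volume := by
    refine ⟨hsm_tr.aestronglyMeasurable, ?_⟩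
    rw [show (fun t : ℝ => (starRingEnd ℂ) (g (t - (n : ℝ) * a)))
        = fun t : ℝ => star ((fun s : ℝ => g (s - (n : ℝ) * a)) t) from rfl]
    rw [eLpNorm_congr_norm_ae (Eventually.of_forall fun t => norm_star _)]
    exact hmem_tr.2
  have hmem_h : MemLp h 2 volume := hmem_conj.indicator measurableSet_closedBall
  have hsupp : ∀ t, t ∉ Ioc (x - T / 2) (x - T / 2 + T) → h t = 0 := by
    intro t ht
    exact indicator_of_notMem (fun hmem' => ht (hEsub hmem')) _
  have key := parseval_interval T hT (x - T / 2) h hsm_h hmem_h hsupp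
  have hcoef : ∀ m : ℤ,
      whCoef g a b ((closedBall x r).indicator fun _ => (1 : ℂ)) (m, n)
        = ∫ t : ℝ, h t *
            (starRingEnd ℂ) (Complex.exp (2 * (Real.pi : ℂ) * Complex.I * (m : ℂ) * (t : ℂ) / (T : ℂ))) := by
    intro m
    unfold whCoef gabor
    refine integral_congr_ae (Eventually.of_forall fun t => ?_)
    have hexp : (2 * (Real.pi : ℂ) * Complex.I * ((m : ℂ) * (b : ℂ)) * (t : ℂ))
        = 2 * (Real.pi : ℂ) * Complex.I * (m : ℂ) * (t : ℂ) / (T : ℂ) := by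
      have hbne : (b : ℂ) ≠ 0 := by exact_mod_cast hb.ne'
      rw [hTdef]
      push_cast
      field_simp
    by_cases ht : t ∈ E
    · simp only [hhdef, hEdef, indicator_of_mem (show t ∈ closedBall x r from ht)]
      rw [← hexp, map_mul]
      ring
    · simp only [hhdef, hEdef, indicator_of_notMem (show t ∉ closedBall x r from ht)]
      simp
  calc ∑' m : ℤ, ‖whCoef g a b ((closedBall x r).indicator fun _ => (1 : ℂ)) (m, n)‖ ^ 2
      = ∑' m : ℤ, ‖∫ t : ℝ, h t *
          (starRingEnd ℂ) (Complex.exp (2 * (Real.pi : ℂ) * Complex.I * (m : ℂ) * (t : ℂ) / (T : ℂ)))‖ ^ 2 := by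
        exact tsum_congr fun m => by rw [hcoef]
    _ = T * ∫ t : ℝ, ‖h t‖ ^ 2 := key
    _ = b⁻¹ * ∫ t in closedBall x r, ‖g (t - (n : ℝ) * a)‖ ^ 2 := by
        rw [hTdef]
        congr 1
        rw [← integral_indicator measurableSet_closedBall]
        refine integral_congr_ae (Eventually.of_forall fun t => ?_)
        by_cases ht : t ∈ E
        · simp only [hhdef, hEdef, indicator_of_mem (show t ∈ closedBall x r from ht)]
          rw [RCLike.norm_conj]
        · simp only [hhdef, hEdef, indicator_of_notMem (show t ∉ closedBall x r from ht)]
          simp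

/-- The integral of the periodization of `|g|²` over a small ball, computed via the frame
inequalities. -/
lemma lintegral_ball_eq (g : ℝ → ℂ) (a b A B : ℝ) (hb : 0 < b)
    (hsm : StronglyMeasurable g) (hg : IsWHFrameWith g a b A B)
    (x r : ℝ) (hr : 0 < r) (hr2 : 2 * r < b⁻¹) :
    ∃ S : ℝ, (∫⁻ t in closedBall x r, ∑' n : ℤ, ((‖g (t - (n : ℝ) * a)‖₊ : ℝ≥0∞)) ^ 2)
        = ENNReal.ofReal S ∧
      b * A * (2 * r) ≤ S ∧ S ≤ b * B * (2 * r) := by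
  obtain ⟨hgmem, hA, hB, hframe⟩ := hg
  set E : Set ℝ := closedBall x r with hEdef
  set f : ℝ → ℂ := E.indicator fun _ => 1 with hfdef
  have hfmem : MemLp f 2 volume :=
    memLp_indicator_const 2 measurableSet_closedBall 1
      (Or.inr (by rw [Real.volume_closedBall]; exact ENNReal.ofReal_ne_top))
  obtain ⟨hsumm, hlow, hupp⟩ := hframe f hfmem
  have hfint : (∫ t : ℝ, ‖f t‖ ^ 2) = 2 * r := by
    have hpt : ∀ t, ‖f t‖ ^ 2 = E.indicator (fun _ => (1 : ℝ)) t := fun t => by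
      by_cases ht : t ∈ E
      · simp [hfdef, indicator_of_mem ht]
      · simp [hfdef, indicator_of_notMem ht]
    rw [integral_congr_ae (Eventually.of_forall hpt),
      integral_indicator measurableSet_closedBall, setIntegral_const, smul_eq_mul, mul_one,
      Real.volume_real_closedBall (by positivity)]
  set I : ℤ → ℝ := fun n => ∫ t in E, ‖g (t - (n : ℝ) * a)‖ ^ 2 with hIdef
  have hIn : ∀ n : ℤ, (∑' m : ℤ, ‖whCoef g a b f (m, n)‖ ^ 2) = b⁻¹ * I n := fun n =>
    coef_sum_eq g a b hb hsm hgmem x r hr hr2 n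
  have hInn : ∀ n : ℤ, 0 ≤ I n := fun n => integral_nonneg fun t => by positivity
  set W : ℤ × ℤ → ℝ := fun p => ‖whCoef g a b f p‖ ^ 2 with hWdef
  have hsumm' : Summable (W ∘ (Equiv.prodComm ℤ ℤ)) := (Equiv.summable_iff _).mpr hsumm
  have htot : (∑' p : ℤ × ℤ, W p) = ∑' n : ℤ, (b⁻¹ * I n) := by
    calc (∑' p : ℤ × ℤ, W p) = ∑' q : ℤ × ℤ, W ((Equiv.prodComm ℤ ℤ) q) :=
          ((Equiv.prodComm ℤ ℤ).tsum_eq W).symm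
      _ = ∑' (n : ℤ) (m : ℤ), W ((Equiv.prodComm ℤ ℤ) (n, m)) := Summable.tsum_prod hsumm'
      _ = ∑' n : ℤ, (b⁻¹ * I n) := tsum_congr fun n => hIn n
  have houter : Summable fun n : ℤ => b⁻¹ * I n := by
    have h0 := ((summable_prod_of_nonneg (fun q => pow_nonneg (norm_nonneg _) 2)).mp hsumm').2
    exact h0.congr fun n => hIn n
  have hIsummable : Summable I := by
    refine (houter.mul_left b).congr fun n => ?_
    show b * (b⁻¹ * I n) = I n
    field_simp
  set S : ℝ := ∑' n : ℤ, I n with hSdef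
  have hSnn : 0 ≤ S := tsum_nonneg hInn
  have htot' : (∑' p : ℤ × ℤ, W p) = b⁻¹ * S := by rw [htot, hSdef, tsum_mul_left]
  rw [hfint] at hlow hupp
  rw [htot'] at hlow hupp
  have hbb : b * (b⁻¹ * S) = S := by field_simp
  have hlow' : b * A * (2 * r) ≤ S := by
    have h1 := mul_le_mul_of_nonneg_left hlow hb.le
    have h2 : b * (A * (2 * r)) = b * A * (2 * r) := by ring
    linarith
  have hupp' : S ≤ b * B * (2 * r) := by
    have h1 := mul_le_mul_of_nonneg_left hupp hb.le
    have h2 : b * (B * (2 * r)) = b * B * (2 * r) := by ring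
    linarith
  refine ⟨S, ?_, hlow', hupp'⟩
  -- now compute the lintegral
  have hint_n : ∀ n : ℤ, Integrable (fun t : ℝ => ‖g (t - (n : ℝ) * a)‖ ^ 2) volume := by
    intro n
    have h0 : Integrable (fun t : ℝ => ‖g t‖ ^ 2) volume := by
      have h1 := hgmem.integrable_norm_rpow (by norm_num) (by norm_num)
      refine h1.congr (Eventually.of_forall fun t => ?_)
      show ‖g t‖ ^ ((2 : ℝ≥0∞)).toReal = ‖g t‖ ^ 2
      rw [show ((2 : ℝ≥0∞)).toReal = ((2 : ℕ) : ℝ) from by norm_num, Real.rpow_natCast]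
    exact ((measurePreserving_sub_right volume ((n : ℝ) * a)).integrable_comp
      h0.aestronglyMeasurable).mpr h0
  have hkey : ∀ n : ℤ, (∫⁻ t in E, ((‖g (t - (n : ℝ) * a)‖₊ : ℝ≥0∞)) ^ 2)
      = ENNReal.ofReal (I n) := by
    intro n
    rw [hIdef]
    rw [ofReal_integral_eq_lintegral_ofReal ((hint_n n).integrableOn)
      (Eventually.of_forall fun t => by positivity)]
    refine lintegral_congr fun t => ?_
    rw [ENNReal.ofReal_pow (norm_nonneg _), ofReal_norm, enorm_eq_nnnorm]
  have hmeas_n : ∀ n : ℤ, Measurable fun t : ℝ => ((‖g (t - (n : ℝ) * a)‖₊ : ℝ≥0∞)) ^ 2 :=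
    fun n => ((hsm.measurable.comp (measurable_id.sub_const _)).nnnorm.coe_nnreal_ennreal).pow_const 2
  rw [lintegral_tsum fun n => (hmeas_n n).aemeasurable]
  rw [show (∑' n : ℤ, ∫⁻ t in E, ((‖g (t - (n : ℝ) * a)‖₊ : ℝ≥0∞)) ^ 2)
      = ∑' n : ℤ, ENNReal.ofReal (I n) from tsum_congr fun n => hkey n]
  rw [hSdef, ENNReal.ofReal_tsum_of_nonneg hInn hIsummable]

/-- Main bounds, for a strongly measurable window. -/
lemma aux_main (g : ℝ → ℂ) (a b A B : ℝ) (hb : 0 < b) (hsm : StronglyMeasurable g)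
    (hg : IsWHFrameWith g a b A B) :
    ∀ᵐ t : ℝ, b * A ≤ (∑' n : ℤ, ‖g (t - (n : ℝ) * a)‖ ^ 2) ∧
      (∑' n : ℤ, ‖g (t - (n : ℝ) * a)‖ ^ 2) ≤ b * B := by
  set Φ : ℝ → ℝ≥0∞ := fun t => ∑' n : ℤ, ((‖g (t - (n : ℝ) * a)‖₊ : ℝ≥0∞)) ^ 2 with hΦdef
  have hΦmeas : Measurable Φ := Measurable.ennreal_tsum fun n =>
    ((hsm.measurable.comp (measurable_id.sub_const _)).nnnorm.coe_nnreal_ennreal).pow_const 2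
  set G : ℝ → ℝ := fun t => (Φ t).toReal with hGdef
  have hGtsum : ∀ t, (∑' n : ℤ, ‖g (t - (n : ℝ) * a)‖ ^ 2) = G t := by
    intro t
    rw [hGdef]
    dsimp only
    rw [hΦdef]
    dsimp only
    rw [ENNReal.tsum_toReal_eq fun n => (ENNReal.pow_ne_top ENNReal.coe_ne_top)]
    exact tsum_congr fun n => by
      rw [ENNReal.toReal_pow, ENNReal.coe_toReal, coe_nnnorm]
  have hball : ∀ x r : ℝ, 0 < r → 2 * r < b⁻¹ →
      IntegrableOn G (closedBall x r) volume ∧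
      b * A * (2 * r) ≤ (∫ t in closedBall x r, G t) ∧
      (∫ t in closedBall x r, G t) ≤ b * B * (2 * r) := by
    intro x r hr hr2
    obtain ⟨S, hS, h1, h2⟩ := lintegral_ball_eq g a b A B hb hsm hg x r hr hr2
    have hfin : (∫⁻ t in closedBall x r, Φ t) ≠ ⊤ := by rw [hS]; exact ENNReal.ofReal_ne_top
    have hA : 0 < A := hg.2.1
    have hSnn : 0 ≤ S :=
      le_trans (mul_nonneg (mul_nonneg hb.le hA.le) (by linarith)) h1
    have hio : IntegrableOn G (closedBall x r) volume :=
      integrable_toReal_of_lintegral_ne_top hΦmeas.aemeasurable.restrict hfin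
    have hGeq : (∫ t in closedBall x r, G t) = S := by
      rw [hGdef]
      rw [integral_toReal hΦmeas.aemeasurable.restrict
        (ae_lt_top' hΦmeas.aemeasurable.restrict hfin)]
      rw [hS, ENNReal.toReal_ofReal hSnn]
    exact ⟨hio, by rw [hGeq]; exact h1, by rw [hGeq]; exact h2⟩
  set r₀ : ℝ := min 1 (b⁻¹ / 4) with hr₀def
  have hbinv : 0 < b⁻¹ := by positivity
  have hr₀ : 0 < r₀ := lt_min one_pos (by positivity)
  have hr₀2 : 2 * r₀ < b⁻¹ := by
    have h1 : r₀ ≤ b⁻¹ / 4 := min_le_right _ _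
    linarith
  have hGloc : LocallyIntegrable G volume := fun x =>
    ⟨closedBall x r₀, closedBall_mem_nhds x hr₀, (hball x r₀ hr₀ hr₀2).1⟩
  filter_upwards [(Besicovitch.vitaliFamily (volume : Measure ℝ)).ae_tendsto_average hGloc]
    with x hx
  have htend : Tendsto (fun r : ℝ => ⨍ y in closedBall x r, G y) (𝓝[>] (0 : ℝ)) (𝓝 (G x)) :=
    hx.comp (Besicovitch.tendsto_filterAt volume x)
  have hev : ∀ᶠ r in 𝓝[>] (0 : ℝ),
      b * A ≤ (⨍ y in closedBall x r, G y) ∧ (⨍ y in closedBall x r, G y) ≤ b * B := by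
    filter_upwards [Ioo_mem_nhdsGT_of_mem (⟨le_refl (0 : ℝ), by linarith⟩ :
        (0 : ℝ) ∈ Ico (0 : ℝ) (b⁻¹ / 2))] with r hrmem
    obtain ⟨hr, hrlt⟩ := hrmem
    have h2r : 2 * r < b⁻¹ := by linarith
    obtain ⟨hio, h1, h2⟩ := hball x r hr h2r
    have havg : (⨍ y in closedBall x r, G y) = (2 * r)⁻¹ * ∫ y in closedBall x r, G y := by
      rw [setAverage_eq, Real.volume_real_closedBall (by positivity),
        smul_eq_mul]
    have h2rpos : (0 : ℝ) < 2 * r := by linarith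
    constructor
    · rw [havg]
      have := mul_le_mul_of_nonneg_left h1 (inv_nonneg.mpr h2rpos.le)
      calc b * A = (2 * r)⁻¹ * (b * A * (2 * r)) := by field_simp
        _ ≤ (2 * r)⁻¹ * ∫ y in closedBall x r, G y := this
    · rw [havg]
      have := mul_le_mul_of_nonneg_left h2 (inv_nonneg.mpr h2rpos.le)
      calc (2 * r)⁻¹ * (∫ y in closedBall x r, G y) ≤ (2 * r)⁻¹ * (b * B * (2 * r)) := this
        _ = b * B := by field_simp
  rw [hGtsum x]
  exact ⟨ge_of_tendsto htend (hev.mono fun r h => h.1),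
    le_of_tendsto htend (hev.mono fun r h => h.2)⟩

/-- If `(g,a,b)` is a WH-frame with frame bounds `A, B`, then
`bA ≤ ∑_n |g(t-na)|² ≤ bB` for a.e. `t`. -/
theorem whframe_pointwise_bounds (g : ℝ → ℂ) (a b A B : ℝ) (ha : 0 < a) (hb : 0 < b)
    (hg : IsWHFrameWith g a b A B) :
    ∀ᵐ t : ℝ, b * A ≤ (∑' n : ℤ, ‖g (t - (n : ℝ) * a)‖ ^ 2) ∧
      (∑' n : ℤ, ‖g (t - (n : ℝ) * a)‖ ^ 2) ≤ b * B := by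
  have hsm' := hg.1.aestronglyMeasurable
  set g' : ℝ → ℂ := hsm'.mk g with hg'def
  have hae : g =ᵐ[volume] g' := hsm'.ae_eq_mk
  have hg'sm : StronglyMeasurable g' := hsm'.stronglyMeasurable_mk
  have htr : ∀ c : ℝ, (fun t : ℝ => g (t - c)) =ᵐ[volume] fun t : ℝ => g' (t - c) := fun c =>
    hae.comp_tendsto (measurePreserving_sub_right volume c).quasiMeasurePreserving.tendsto_ae
  have hcoef : ∀ (f : ℝ → ℂ) (p : ℤ × ℤ), whCoef g' a b f p = whCoef g a b f p := by
    intro f p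
    refine integral_congr_ae ?_
    filter_upwards [htr ((p.2 : ℝ) * a)] with t ht
    have ht' : g (t - (p.2 : ℝ) * a) = g' (t - (p.2 : ℝ) * a) := ht
    unfold gabor
    rw [← ht']
  have hWH' : IsWHFrameWith g' a b A B := by
    refine ⟨hg.1.ae_eq hae, hg.2.1, hg.2.2.1, fun f hf => ?_⟩
    obtain ⟨h1, h2, h3⟩ := hg.2.2.2 f hf
    have hWeq : (fun p : ℤ × ℤ => ‖whCoef g' a b f p‖ ^ 2)
        = fun p : ℤ × ℤ => ‖whCoef g a b f p‖ ^ 2 := funext fun p => by rw [hcoef]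
    rw [hWeq]
    exact ⟨h1, h2, h3⟩
  have hmain := aux_main g' a b A B hb hg'sm hWH'
  have halln : ∀ᵐ t : ℝ, ∀ n : ℤ, g (t - (n : ℝ) * a) = g' (t - (n : ℝ) * a) :=
    ae_all_iff.2 fun n => htr ((n : ℝ) * a)
  filter_upwards [hmain, halln] with t h1 h2
  rw [show (∑' n : ℤ, ‖g (t - (n : ℝ) * a)‖ ^ 2) = ∑' n : ℤ, ‖g' (t - (n : ℝ) * a)‖ ^ 2 from
    tsum_congr fun n => by rw [h2 n]]
  exact h1

end
end
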